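/- arXiv:1305.3960 — 4 statements merged into one kernel-verified Lean document; each statement's English description precedes it below -/
import Mathlib

section
/- Let P₁, …, P_{d+1} be finite point sets in ℝ^d. If x ∈ ⋂_{i=1}^{d+1} conv(P_i), then there exist points p₁ ∈ P₁, …, p_{d+1} ∈ P_{d+1} such that x ∈ conv{p₁, …, p_{d+1}}. -/
open Metric Finset Module RealInnerProductSpace

private lemma closer_on_segment {V : Type*} [NormedAddCommGroup V] [InnerProductSpace ℝ V]
    (x y q : V) (h : 0 < ⟪x - y, q - y⟫) :
    ∃ t : ℝ, 0 ≤ t ∧ t ≤ 1 ∧ dist x ((1 - t) • y + t • q) < dist x y := by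
  have hqy : q - y ≠ 0 := by
    intro h0
    rw [h0, inner_zero_right] at h
    exact lt_irrefl 0 h
  set c : ℝ := ⟪x - y, q - y⟫ with hc
  set b : ℝ := ‖q - y‖ ^ 2 with hb
  have hbpos : 0 < b := by
    have := norm_pos_iff.mpr hqy
    positivity
  set t : ℝ := min 1 (c / b) with ht
  have ht0 : 0 < t := lt_min one_pos (div_pos h hbpos)
  have ht1 : t ≤ 1 := min_le_left _ _
  have htb : t * b ≤ c := by
    have : t ≤ c / b := min_le_right _ _
    calc t * b ≤ (c / b) * b := by nlinarith
    _ = c := by field_simp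
  refine ⟨t, le_of_lt ht0, ht1, ?_⟩
  have hxz : x - ((1 - t) • y + t • q) = (x - y) - t • (q - y) := by
    module
  have hsq : ‖(x - y) - t • (q - y)‖ ^ 2 < ‖x - y‖ ^ 2 := by
    rw [norm_sub_sq_real, real_inner_smul_right, norm_smul]
    have habs : (‖t‖ * ‖q - y‖) ^ 2 = t ^ 2 * b := by
      rw [mul_pow, hb, Real.norm_eq_abs, sq_abs]
    rw [habs]
    nlinarith [mul_pos ht0 h, mul_le_mul_of_nonneg_left htb (le_of_lt ht0)]
  rw [dist_eq_norm, dist_eq_norm, hxz]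
  exact lt_of_pow_lt_pow_left₀ 2 (norm_nonneg _) hsq

/-- **Bárány's Colorful Carathéodory theorem.** If `x` lies in the convex hull
of each of `d + 1` finite point sets `P₁, …, P_{d+1}` in `ℝ^d`, then one can choose
one point `pᵢ ∈ Pᵢ` from each set so that `x ∈ conv {p₁, …, p_{d+1}}`. -/
theorem colorful_caratheodory (d : ℕ)
    (P : Fin (d + 1) → Finset (EuclideanSpace ℝ (Fin d)))
    (x : EuclideanSpace ℝ (Fin d))
    (hx : ∀ i, x ∈ convexHull ℝ (P i : Set (EuclideanSpace ℝ (Fin d)))) :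
    ∃ p : Fin (d + 1) → EuclideanSpace ℝ (Fin d),
      (∀ i, p i ∈ P i) ∧ x ∈ convexHull ℝ (Set.range p) := by
  classical
  -- each color class is nonempty
  have hPne : ∀ i, (P i).Nonempty := by
    intro i
    rw [← Finset.coe_nonempty, ← convexHull_nonempty_iff (𝕜 := ℝ)]
    exact ⟨x, hx i⟩
  -- the finite set of colorful selections
  set S : Finset (Fin (d + 1) → EuclideanSpace ℝ (Fin d)) := Fintype.piFinset P with hS
  have hSne : S.Nonempty := by
    refine ⟨fun i => (hPne i).choose, ?_⟩
    rw [hS, Fintype.mem_piFinset]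
    exact fun i => (hPne i).choose_spec
  -- pick a selection minimizing the distance from x to its hull
  obtain ⟨p₀, hp₀S, hmin⟩ :=
    S.exists_min_image (fun p => infDist x (convexHull ℝ (Set.range p))) hSne
  have hp₀ : ∀ i, p₀ i ∈ P i := by
    rw [hS, Fintype.mem_piFinset] at hp₀S; exact hp₀S
  set K : Set (EuclideanSpace ℝ (Fin d)) := convexHull ℝ (Set.range p₀) with hK
  have hKconv : Convex ℝ K := convex_convexHull ℝ _
  have hKcpt : IsCompact K := (Set.finite_range p₀).isCompact_convexHull ℝ
  have hKne : K.Nonempty := by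
    rw [hK, convexHull_nonempty_iff]; exact Set.range_nonempty _
  obtain ⟨y, hyK, hyd⟩ := hKcpt.exists_infDist_eq_dist hKne x
  by_cases hxy : x = y
  · exact ⟨p₀, hp₀, hxy ▸ hyK⟩
  exfalso
  set v : EuclideanSpace ℝ (Fin d) := x - y with hv
  have hvne : v ≠ 0 := sub_ne_zero.2 hxy
  -- nearest point property : obtuse angles
  have hA : ∀ w ∈ K, ⟪v, w - y⟫ ≤ 0 := by
    intro w hwK
    by_contra hpos
    push_neg at hpos
    obtain ⟨t, ht0, ht1, hlt⟩ := closer_on_segment x y w hpos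
    have hz : (1 - t) • y + t • w ∈ K := hKconv hyK hwK (by linarith) ht0 (by ring)
    have h1 := infDist_le_dist_of_mem (x := x) hz
    rw [← hyd] at hlt
    linarith
  -- write y as a convex combination of the selected points
  set s : Finset (EuclideanSpace ℝ (Fin d)) := Finset.image p₀ Finset.univ with hs
  have hscoe : (s : Set (EuclideanSpace ℝ (Fin d))) = Set.range p₀ := by
    simp [hs]
  have hyhull : y ∈ convexHull ℝ (s : Set (EuclideanSpace ℝ (Fin d))) := by
    rw [hscoe]; exact hyK
  rw [Finset.convexHull_eq, Set.mem_setOf_eq] at hyhull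
  obtain ⟨w, hw0, hw1, hwy⟩ := hyhull
  have hsum : ∑ z ∈ s, w z • z = y := by
    rw [← Finset.centerMass_eq_of_sum_1 _ _ hw1]
    exact hwy
  have hsK : ∀ z ∈ s, z ∈ K := by
    intro z hz
    apply subset_convexHull ℝ _
    rw [← hscoe]; exact_mod_cast hz
  have hinner : ∀ z ∈ s, ⟪v, z⟫ ≤ ⟪v, y⟫ := by
    intro z hz
    have := hA z (hsK z hz)
    rw [inner_sub_right] at this
    linarith
  have hvy : ⟪v, y⟫ = ∑ z ∈ s, w z * ⟪v, z⟫ := by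
    rw [← hsum, inner_sum]
    exact Finset.sum_congr rfl fun z _ => real_inner_smul_right _ _ _
  have hsum0 : ∑ z ∈ s, w z * (⟪v, y⟫ - ⟪v, z⟫) = 0 := by
    have : ∑ z ∈ s, w z * (⟪v, y⟫ - ⟪v, z⟫)
        = (∑ z ∈ s, w z) * ⟪v, y⟫ - ∑ z ∈ s, w z * ⟪v, z⟫ := by
      rw [Finset.sum_mul, ← Finset.sum_sub_distrib]
      exact Finset.sum_congr rfl fun z _ => by ring
    rw [this, hw1, one_mul, ← hvy, sub_self]
  have hzero : ∀ z ∈ s, w z ≠ 0 → ⟪v, z⟫ = ⟪v, y⟫ := by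
    intro z hz hwz
    have hterm := (Finset.sum_eq_zero_iff_of_nonneg ?_).mp hsum0 z hz
    · rcases mul_eq_zero.mp hterm with h | h
      · exact absurd h hwz
      · linarith
    · intro u hu
      have := hinner u hu
      have := hw0 u hu
      nlinarith
  -- restrict to the points with nonzero weight; they lie on the hyperplane
  set s' : Finset (EuclideanSpace ℝ (Fin d)) := s.filter (fun z => w z ≠ 0) with hs'
  have hy' : y ∈ convexHull ℝ (s' : Set (EuclideanSpace ℝ (Fin d))) := by
    have hcm : s'.centerMass w id = y := by
      rw [hs', Finset.centerMass_filter_ne_zero]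
      simpa using hwy
    rw [← hcm]
    refine Finset.centerMass_mem_convexHull _ (fun z hz => hw0 z (Finset.mem_of_mem_filter z hz)) ?_
      (fun z hz => by exact_mod_cast hz)
    have hsum' : ∑ z ∈ s', w z = 1 := by
      rw [hs', Finset.sum_filter, ← hw1]
      exact Finset.sum_congr rfl fun z _ => by
        split_ifs with h
        · rfl
        · exact (not_not.mp h).symm
    rw [hsum']
    exact one_pos
  -- Carathéodory within the hyperplane
  rw [convexHull_eq_union] at hy'
  simp only [Set.mem_iUnion, exists_prop] at hy'
  obtain ⟨t, hts, hai, hyt⟩ := hy'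
  have htH : ∀ z ∈ t, ⟪v, z⟫ = ⟪v, y⟫ := by
    intro z hz
    have hz' : z ∈ s' := hts hz
    rw [hs', Finset.mem_filter] at hz'
    exact hzero z hz'.1 hz'.2
  -- dimension count : t has at most d points
  have hdpos : 0 < d := by
    have : Nontrivial (EuclideanSpace ℝ (Fin d)) := ⟨v, 0, hvne⟩
    have h1 : 0 < finrank ℝ (EuclideanSpace ℝ (Fin d)) := finrank_pos
    rwa [finrank_euclideanSpace_fin] at h1
  have hcard : t.card ≤ d := by
    set f : EuclideanSpace ℝ (Fin d) →ₗ[ℝ] ℝ := (innerSL ℝ v).toLinearMap with hf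
    have hfv : f v ≠ 0 := by
      simp only [hf, ContinuousLinearMap.coe_coe, innerSL_apply_apply]
      rw [real_inner_self_eq_norm_sq]
      exact pow_ne_zero 2 (norm_ne_zero_iff.mpr hvne)
    have hfne : f ≠ 0 := fun h => hfv (by rw [h]; rfl)
    have hfsurj : Function.Surjective f := LinearMap.surjective_of_ne_zero hfne
    have hrange : finrank ℝ (LinearMap.range f) = 1 := by
      rw [LinearMap.range_eq_top.mpr hfsurj, finrank_top, finrank_self]
    have hker : finrank ℝ (LinearMap.ker f) = d - 1 := by
      have := f.finrank_range_add_finrank_ker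
      rw [hrange, finrank_euclideanSpace_fin] at this
      omega
    have hspan : vectorSpan ℝ (t : Set (EuclideanSpace ℝ (Fin d))) ≤ LinearMap.ker f := by
      rw [vectorSpan_def]
      rw [Submodule.span_le]
      rintro u hu
      obtain ⟨a, ha, b, hb, rfl⟩ := Set.mem_vsub.mp hu
      rw [SetLike.mem_coe, LinearMap.mem_ker]
      have : f (a -ᵥ b) = ⟪v, a⟫ - ⟪v, b⟫ := by
        simp [hf, inner_sub_right]
      rw [this, htH a ha, htH b hb, sub_self]
    have h1 := hai.card_le_finrank_succ
    simp only [Fintype.card_coe, Subtype.range_coe] at h1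
    have heq : vectorSpan ℝ (Set.range (Subtype.val : {z // z ∈ t} → EuclideanSpace ℝ (Fin d)))
        = vectorSpan ℝ (t : Set (EuclideanSpace ℝ (Fin d))) := by
      congr 1
      ext z
      simp
    have h3 := congrArg (fun M : Submodule ℝ (EuclideanSpace ℝ (Fin d)) => finrank ℝ M) heq
    rw [h3] at h1
    have h2 : finrank ℝ (vectorSpan ℝ (t : Set (EuclideanSpace ℝ (Fin d))))
        ≤ finrank ℝ (LinearMap.ker f) := Submodule.finrank_mono hspan
    omega
  -- find an unused color j
  have hrange : ∀ z ∈ t, ∃ i : Fin (d + 1), p₀ i = z := by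
    intro z hz
    have : z ∈ s := Finset.mem_of_mem_filter z (hts hz)
    rw [hs, Finset.mem_image] at this
    obtain ⟨i, _, hi⟩ := this
    exact ⟨i, hi⟩
  choose g hg using hrange
  obtain ⟨j, hj⟩ : ∃ j : Fin (d + 1), ∀ z (hz : z ∈ t), g z hz ≠ j := by
    by_contra hcon
    push_neg at hcon
    -- then the map attach → Fin (d+1) is surjective, contradicting cardinalities
    have hsurj : Function.Surjective (fun z : {z // z ∈ t} => g z.1 z.2) := by
      intro j
      obtain ⟨z, hz, hzj⟩ := hcon j
      exact ⟨⟨z, hz⟩, hzj⟩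
    have := Fintype.card_le_of_surjective _ hsurj
    rw [Fintype.card_coe, Fintype.card_fin] at this
    omega
  have hysub : y ∈ convexHull ℝ (p₀ '' {i | i ≠ j}) := by
    refine convexHull_mono ?_ hyt
    intro z hz
    rw [Finset.mem_coe] at hz
    exact ⟨g z hz, hj z hz, hg z hz⟩
  -- find a better point in color class j
  obtain ⟨q, hqP, hqv⟩ : ∃ q ∈ P j, 0 < ⟪v, q - y⟫ := by
    by_contra hcon
    push_neg at hcon
    have hhalf : Convex ℝ {z : EuclideanSpace ℝ (Fin d) | ⟪v, z⟫ ≤ ⟪v, y⟫} :=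
      convex_halfSpace_le ⟨fun a b => inner_add_right _ _ _,
        fun c a => real_inner_smul_right _ _ _⟩ _
    have hsub : (P j : Set (EuclideanSpace ℝ (Fin d))) ⊆ {z | ⟪v, z⟫ ≤ ⟪v, y⟫} := by
      intro q hq
      have := hcon q (by exact_mod_cast hq)
      rw [inner_sub_right] at this
      simp only [Set.mem_setOf_eq]
      linarith
    have hxin := convexHull_min hsub hhalf (hx j)
    simp only [Set.mem_setOf_eq] at hxin
    have hvv : 0 < ⟪v, v⟫ := by
      rw [real_inner_self_eq_norm_sq]
      exact pow_pos (norm_pos_iff.mpr hvne) 2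
    nth_rewrite 2 [hv] at hvv
    rw [inner_sub_right] at hvv
    linarith
  -- the improved selection
  set p₁ : Fin (d + 1) → EuclideanSpace ℝ (Fin d) := Function.update p₀ j q with hp₁
  have hp₁S : p₁ ∈ S := by
    rw [hS, Fintype.mem_piFinset]
    intro i
    by_cases hij : i = j
    · subst hij; rw [hp₁, Function.update_self]; exact hqP
    · rw [hp₁, Function.update_of_ne hij]; exact hp₀ i
  set K' : Set (EuclideanSpace ℝ (Fin d)) := convexHull ℝ (Set.range p₁) with hK'
  have hyK' : y ∈ K' := by
    refine convexHull_mono ?_ hysub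
    rintro z ⟨i, hi, rfl⟩
    exact ⟨i, by rw [hp₁, Function.update_of_ne hi]⟩
  have hqK' : q ∈ K' :=
    subset_convexHull ℝ _ ⟨j, by rw [hp₁, Function.update_self]⟩
  obtain ⟨t', ht0', ht1', hlt⟩ := closer_on_segment x y q hqv
  have hzK' : (1 - t') • y + t' • q ∈ K' :=
    (convex_convexHull ℝ _) hyK' hqK' (by linarith) ht0' (by ring)
  have h1 : infDist x K' ≤ dist x ((1 - t') • y + t' • q) := infDist_le_dist_of_mem hzK'
  have h2 := hmin p₁ hp₁S
  rw [← hK'] at h2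
  rw [← hyd] at hlt
  linarith
end

section
/- Let X be a simplicial complex on a finite vertex set V with V ∉ X. Then for all −1 ≤ i ≤ |V|−2, the reduced homology groups satisfy H̃_i(X^⋆; ℚ) ≅ H̃_{|V|−i−3}(X; ℚ). -/
/-- An abstract simplicial complex on vertex type `V` (containing the empty face). -/
structure SimplicialCpx (V : Type*) where
  faces : Set (Finset V)
  down_closed : ∀ s ∈ faces, ∀ t ⊆ s, t ∈ faces
  empty_mem : (∅ : Finset V) ∈ faces

namespace SimplicialCpx

variable {V : Type*}

/-- `n`-dimensional chains: formal ℚ-linear combinations of faces of cardinality `n`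
(the degree is shifted by one from the usual convention: cardinality `n` faces
have topological dimension `n - 1`; cardinality `0` chains are spanned by the
empty face, giving *reduced* homology). -/
abbrev Chain (X : SimplicialCpx V) (n : ℕ) : Type _ :=
  {s : Finset V // s ∈ X.faces ∧ s.card = n} →₀ ℚ

variable [LinearOrder V]

/-- The simplicial boundary map, from chains on cardinality `n+1` faces to chains on
cardinality `n` faces, with signs determined by the linear order on the vertices. -/
noncomputable def bdry (X : SimplicialCpx V) (n : ℕ) :
    X.Chain (n + 1) →ₗ[ℚ] X.Chain n :=
  Finsupp.lsum ℚ fun s => LinearMap.toSpanSingleton ℚ (X.Chain n)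
    (∑ v ∈ s.1.attach, ((-1 : ℚ) ^ (s.1.filter (· < v.1)).card) •
      Finsupp.single ⟨s.1.erase v.1,
        ⟨X.down_closed _ s.2.1 _ (Finset.erase_subset _ _), by
          rw [Finset.card_erase_of_mem v.2, s.2.2]; rfl⟩⟩ (1 : ℚ))

/-- The cycles of cardinality `n`: all chains for `n = 0`, kernel of the boundary otherwise. -/
noncomputable def cycles (X : SimplicialCpx V) : (n : ℕ) → Submodule ℚ (X.Chain n)
  | 0 => ⊤
  | (m + 1) => LinearMap.ker (X.bdry m)

/-- Reduced simplicial homology with rational coefficients, indexed so that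
`X.redH n` is the reduced homology group `H̃_{n-1}(X; ℚ)` in the usual topological
indexing (thus `X.redH 0 = H̃_{-1}`). -/
noncomputable def redH (X : SimplicialCpx V) (n : ℕ) : Type _ :=
  (X.cycles n) ⧸ (Submodule.comap (X.cycles n).subtype (LinearMap.range (X.bdry n)))

noncomputable instance (X : SimplicialCpx V) (n : ℕ) : AddCommGroup (X.redH n) :=
  inferInstanceAs (AddCommGroup ((X.cycles n) ⧸ _))

noncomputable instance (X : SimplicialCpx V) (n : ℕ) : Module ℚ (X.redH n) :=
  inferInstanceAs (Module ℚ ((X.cycles n) ⧸ _))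

/-- `η(X) = min { j : H̃_j(X;ℚ) ≠ 0 } + 1`, which in our shifted indexing is
`min { n : X.redH n ≠ 0 }`; it is `⊤` if all reduced homology vanishes. -/
noncomputable def eta (X : SimplicialCpx V) : ℕ∞ :=
  sInf {n : ℕ∞ | ∃ m : ℕ, n = (m : ℕ∞) ∧ Nontrivial (X.redH m)}

/-- The induced subcomplex on a vertex subset `S`. -/
def induce (X : SimplicialCpx V) (S : Set V) : SimplicialCpx V where
  faces := {t | t ∈ X.faces ∧ ↑t ⊆ S}
  down_closed := fun s hs t hts =>
    ⟨X.down_closed s hs.1 t hts, subset_trans (by exact_mod_cast hts) hs.2⟩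
  empty_mem := ⟨X.empty_mem, by simp⟩

/-- The link of a face `T` in `X`. -/
def link (X : SimplicialCpx V) (T : Finset V) (hT : T ∈ X.faces) : SimplicialCpx V where
  faces := {R | Disjoint R T ∧ R ∪ T ∈ X.faces}
  down_closed := fun s hs t hts =>
    ⟨Finset.disjoint_of_subset_left hts hs.1,
     X.down_closed _ hs.2 _ (Finset.union_subset_union_left hts)⟩
  empty_mem := ⟨Finset.disjoint_empty_left T, by simpa using hT⟩

/-- The Alexander dual `X^⋆ = { T ⊆ V : V - T ∉ X }` (a simplicial complex provided
the full vertex set is not a face of `X`). -/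
def dual [Fintype V] [DecidableEq V] (X : SimplicialCpx V)
    (h : (Finset.univ : Finset V) ∉ X.faces) : SimplicialCpx V where
  faces := {T | Finset.univ \ T ∉ X.faces}
  down_closed := fun s hs t hts hmem =>
    hs (X.down_closed _ hmem _ (Finset.sdiff_subset_sdiff (subset_refl _) hts))
  empty_mem := by simpa using h

end SimplicialCpx
set_option linter.unusedSectionVars false
namespace SimplicialCpx

variable {V : Type*} [LinearOrder V] [Fintype V]

def sgn (s : Finset V) (v : V) : ℚ := (-1) ^ (s.filter (· < v)).card

open scoped Classical in
noncomputable def gen (X : SimplicialCpx V) (n : ℕ) (s : Finset V) : X.Chain n :=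
  if h : s ∈ X.faces ∧ s.card = n then Finsupp.single ⟨s, h⟩ 1 else 0

lemma gen_of_mem (X : SimplicialCpx V) {n : ℕ} {s : Finset V} (h1 : s ∈ X.faces)
    (h2 : s.card = n) : X.gen n s = Finsupp.single ⟨s, ⟨h1, h2⟩⟩ 1 := by
  rw [gen, dif_pos ⟨h1, h2⟩]

lemma gen_of_not_mem (X : SimplicialCpx V) {n : ℕ} {s : Finset V} (h1 : s ∉ X.faces) :
    X.gen n s = 0 := by
  rw [gen, dif_neg (fun hc => h1 hc.1)]

lemma gen_of_card_ne (X : SimplicialCpx V) {n : ℕ} {s : Finset V} (h1 : s.card ≠ n) :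
    X.gen n s = 0 := by
  rw [gen, dif_neg (fun hc => h1 hc.2)]

lemma bdry_single (X : SimplicialCpx V) (n : ℕ) (σ : {s : Finset V // s ∈ X.faces ∧ s.card = n + 1}) :
    X.bdry n (Finsupp.single σ 1) = ∑ v ∈ σ.1, sgn σ.1 v • X.gen n (σ.1.erase v) := by
  rw [bdry, Finsupp.lsum_single, LinearMap.toSpanSingleton_apply_one]
  rw [← Finset.sum_attach σ.1 (fun v => sgn σ.1 v • X.gen n (σ.1.erase v))]
  refine Finset.sum_congr rfl fun v _ => ?_
  rw [X.gen_of_mem (X.down_closed _ σ.2.1 _ (Finset.erase_subset _ _))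
    (by rw [Finset.card_erase_of_mem v.2, σ.2.2]; rfl)]
  rfl

end SimplicialCpx

namespace SimplicialCpx

variable {V : Type*} [LinearOrder V] [Fintype V]

lemma bdry_gen (X : SimplicialCpx V) (n : ℕ) {s : Finset V} (h1 : s ∈ X.faces) :
    X.bdry n (X.gen (n+1) s) = ∑ v ∈ s, sgn s v • X.gen n (s.erase v) := by
  by_cases h2 : s.card = n + 1
  · rw [X.gen_of_mem h1 h2, bdry_single]
  · rw [X.gen_of_card_ne h2, map_zero]
    refine (Finset.sum_eq_zero fun v hv => ?_).symm
    have hc1 := Finset.card_erase_of_mem hv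
    have hc2 : 0 < s.card := Finset.card_pos.2 ⟨v, hv⟩
    rw [X.gen_of_card_ne (fun hc => by omega), smul_zero]

lemma sgn_mul_lt (s : Finset V) {v w : V} (hv : v ∈ s) (hw : w ∈ s) (hwv : w < v) :
    sgn s v * sgn (s.erase v) w = -(sgn s w * sgn (s.erase w) v) := by
  have h1 : (s.erase v).filter (· < w) = s.filter (· < w) := by
    rw [Finset.filter_erase, Finset.erase_eq_of_notMem]
    simp only [Finset.mem_filter, not_and]
    intro _ hvw
    exact absurd (hvw.trans hwv) (lt_irrefl v)
  have h2 : (s.erase w).filter (· < v) = (s.filter (· < v)).erase w :=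
    Finset.filter_erase _ _ _
  have hw' : w ∈ s.filter (· < v) := Finset.mem_filter.2 ⟨hw, hwv⟩
  have h3 : ((s.filter (· < v)).erase w).card + 1 = (s.filter (· < v)).card :=
    Finset.card_erase_add_one hw'
  unfold sgn
  rw [h1, h2, ← h3, pow_succ]
  ring

lemma sgn_mul_antisym (s : Finset V) {v w : V} (hv : v ∈ s) (hw : w ∈ s) (hne : v ≠ w) :
    sgn s v * sgn (s.erase v) w = -(sgn s w * sgn (s.erase w) v) := by
  rcases hne.lt_or_gt with h | h
  · have := sgn_mul_lt s hw hv h; linarith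
  · exact sgn_mul_lt s hv hw h

lemma bdry_bdry_single (X : SimplicialCpx V) (n : ℕ)
    (σ : {s : Finset V // s ∈ X.faces ∧ s.card = n + 1 + 1}) :
    X.bdry n (X.bdry (n+1) (Finsupp.single σ 1)) = 0 := by
  set s := σ.1 with hs
  rw [bdry_single, map_sum]
  have step : ∀ v ∈ s, X.bdry n (sgn s v • X.gen (n+1) (s.erase v)) =
      ∑ w ∈ s, (if w ≠ v then (sgn s v * sgn (s.erase v) w) • X.gen n ((s.erase v).erase w) else 0) := by
    intro v hv
    rw [map_smul, X.bdry_gen n (X.down_closed _ σ.2.1 _ (Finset.erase_subset _ _)),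
      Finset.smul_sum, ← Finset.filter_ne' s v, Finset.sum_filter]
    refine Finset.sum_congr rfl fun w hw => ?_
    split
    · rw [smul_smul]
    · rfl
  rw [Finset.sum_congr rfl step, ← Finset.sum_product']
  refine Finset.sum_involution (fun p _ => Prod.swap p) ?_ ?_ ?_ ?_
  · rintro ⟨v, w⟩ hp
    simp only [Finset.mem_product] at hp
    simp only [Prod.swap_prod_mk]
    by_cases hne : w = v
    · subst hne; simp
    · rw [if_pos hne, if_pos (fun hc => hne (Eq.symm hc)), Finset.erase_right_comm,
        ← add_smul, sgn_mul_antisym s hp.1 hp.2 (fun hc => hne (Eq.symm hc)), neg_add_cancel,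
        zero_smul]
  · rintro ⟨v, w⟩ - hf
    have hne : w ≠ v := by
      intro hc; rw [if_neg (by simp [hc])] at hf; exact hf rfl
    simp only [ne_eq, Prod.ext_iff, not_and]
    intro h1; exact absurd h1 hne
  · rintro ⟨v, w⟩ hp
    simpa [Finset.mem_product, and_comm] using hp
  · rintro ⟨v, w⟩ hp; rfl

end SimplicialCpx

namespace SimplicialCpx
variable {V : Type*} [LinearOrder V] [Fintype V]

lemma bdry_bdry (X : SimplicialCpx V) (n : ℕ) : (X.bdry n).comp (X.bdry (n+1)) = 0 := by
  apply Finsupp.lhom_ext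
  intro σ b
  have hb : (Finsupp.single σ b) = b • Finsupp.single σ 1 := by
    rw [Finsupp.smul_single, smul_eq_mul, mul_one]
  rw [hb, LinearMap.comp_apply, map_smul, map_smul, bdry_bdry_single, smul_zero,
    LinearMap.zero_apply]

def full (V : Type*) [LinearOrder V] [Fintype V] : SimplicialCpx V :=
  ⟨Set.univ, fun _ _ _ _ => trivial, trivial⟩

lemma full_mem (s : Finset V) : s ∈ (full V).faces := trivial

open scoped Classical in
noncomputable def hmt (v0 : V) (k : ℕ) : (full V).Chain k →ₗ[ℚ] (full V).Chain (k+1) :=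
  Finsupp.lsum ℚ fun σ => LinearMap.toSpanSingleton ℚ _
    (if v0 ∈ σ.1 then 0 else (full V).gen (k+1) (insert v0 σ.1))

lemma hmt_single (v0 : V) (k : ℕ) (σ : {s : Finset V // s ∈ (full V).faces ∧ s.card = k}) :
    hmt v0 k (Finsupp.single σ 1) =
      if v0 ∈ σ.1 then 0 else (full V).gen (k+1) (insert v0 σ.1) := by
  rw [hmt, Finsupp.lsum_single, LinearMap.toSpanSingleton_apply_one]

lemma hmt_gen (v0 : V) (k : ℕ) (t : Finset V) :
    hmt v0 k ((full V).gen k t) =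
      if v0 ∈ t then 0 else (full V).gen (k+1) (insert v0 t) := by
  by_cases h2 : t.card = k
  · rw [(full V).gen_of_mem (full_mem t) h2, hmt_single]
  · rw [(full V).gen_of_card_ne h2, map_zero]
    split
    · rfl
    · rename_i hv
      rw [(full V).gen_of_card_ne (by rw [Finset.card_insert_of_notMem hv]; omega)]

lemma sgn_min (v0 : V) (hv0 : ∀ u : V, v0 ≤ u) (s : Finset V) : sgn s v0 = 1 := by
  rw [sgn, Finset.filter_eq_empty_iff.2 (fun {u} _ => not_lt.2 (hv0 u)), Finset.card_empty,
    pow_zero]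

lemma sgn_insert (v0 : V) (hv0 : ∀ u : V, v0 ≤ u) {s : Finset V} {v : V} (hvs : v ∈ s)
    (hv0s : v0 ∉ s) : sgn (insert v0 s) v = -sgn s v := by
  have hne : v0 ≠ v := fun hc => hv0s (hc ▸ hvs)
  have hlt : v0 < v := lt_of_le_of_ne (hv0 v) hne
  rw [sgn, sgn, Finset.filter_insert, if_pos hlt,
    Finset.card_insert_of_notMem (fun hc => hv0s (Finset.mem_filter.1 hc).1), pow_succ]
  ring

lemma homotopy_succ (v0 : V) (hv0 : ∀ u : V, v0 ≤ u) (k : ℕ) :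
    ((full V).bdry (k+1)).comp (hmt v0 (k+1)) + (hmt v0 k).comp ((full V).bdry k) =
      LinearMap.id := by
  apply Finsupp.lhom_ext
  intro σ b
  have hb : (Finsupp.single σ b) = b • Finsupp.single σ 1 := by
    rw [Finsupp.smul_single, smul_eq_mul, mul_one]
  rw [hb, map_smul, map_smul, LinearMap.id_apply]
  congr 1
  rw [LinearMap.add_apply, LinearMap.comp_apply, LinearMap.comp_apply, hmt_single, bdry_single]
  set s := σ.1 with hs
  by_cases hv : v0 ∈ s
  · rw [if_pos hv, map_zero, zero_add, map_sum]
    rw [Finset.sum_eq_single_of_mem v0 hv (fun v hvmem hvne => by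
      rw [map_smul, hmt_gen, if_pos (Finset.mem_erase.2 ⟨fun hc => hvne (hc.symm), hv⟩),
        smul_zero])]
    rw [map_smul, hmt_gen, if_neg (Finset.notMem_erase v0 s), Finset.insert_erase hv,
      sgn_min v0 hv0, (full V).gen_of_mem (full_mem s) σ.2.2, one_smul]
  · rw [if_neg hv, (full V).bdry_gen _ (full_mem _), Finset.sum_insert hv, map_sum]
    have e1 : (insert v0 s).erase v0 = s := Finset.erase_insert hv
    have e2 : ∀ v ∈ s, (insert v0 s).erase v = insert v0 (s.erase v) := fun v hvmem =>
      Finset.erase_insert_of_ne (fun hc => hv (hc ▸ hvmem))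
    have e3 : ∀ v ∈ s, hmt v0 k (sgn s v • (full V).gen k (s.erase v)) =
        sgn s v • (full V).gen (k+1) (insert v0 (s.erase v)) := fun v hvmem => by
      rw [map_smul, hmt_gen, if_neg (fun hc => hv (Finset.mem_of_mem_erase hc))]
    rw [Finset.sum_congr rfl e3, e1, sgn_min v0 hv0, one_smul,
      (full V).gen_of_mem (full_mem s) σ.2.2]
    have e4 : ∀ v ∈ s, sgn (insert v0 s) v • (full V).gen (k+1) ((insert v0 s).erase v) =
        -(sgn s v • (full V).gen (k+1) (insert v0 (s.erase v))) := fun v hvmem => by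
      rw [e2 v hvmem, sgn_insert v0 hv0 hvmem hv, neg_smul]
    rw [Finset.sum_congr rfl e4, Finset.sum_neg_distrib]
    abel

lemma homotopy_zero (v0 : V) (hv0 : ∀ u : V, v0 ≤ u) :
    ((full V).bdry 0).comp (hmt v0 0) = LinearMap.id := by
  apply Finsupp.lhom_ext
  intro σ b
  have hb : (Finsupp.single σ b) = b • Finsupp.single σ 1 := by
    rw [Finsupp.smul_single, smul_eq_mul, mul_one]
  rw [hb, map_smul, map_smul, LinearMap.id_apply]
  congr 1
  have hs : σ.1 = ∅ := Finset.card_eq_zero.1 σ.2.2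
  rw [LinearMap.comp_apply, hmt_single, hs, if_neg (Finset.notMem_empty v0),
    Finset.insert_empty, (full V).bdry_gen _ (full_mem _), Finset.sum_singleton,
    Finset.erase_singleton, sgn_min v0 hv0, one_smul,
    (full V).gen_of_mem (n := 0) (full_mem ∅) Finset.card_empty]
  exact (Finsupp.single_eq_single_iff _ _ _ _).2 (Or.inl ⟨Subtype.ext hs.symm, rfl⟩)

end SimplicialCpx

namespace SimplicialCpx
variable {V : Type*} [LinearOrder V] [Fintype V]

lemma lhom_single_ext {α : Type*} {M : Type*} [AddCommMonoid M] [Module ℚ M]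
    {f g : (α →₀ ℚ) →ₗ[ℚ] M} (h : ∀ a, f (Finsupp.single a 1) = g (Finsupp.single a 1)) :
    f = g := by
  apply Finsupp.lhom_ext
  intro a b
  have hb : (Finsupp.single a b) = b • Finsupp.single a 1 := by
    rw [Finsupp.smul_single, smul_eq_mul, mul_one]
  rw [hb, map_smul, map_smul, h a]

abbrev NF (X : SimplicialCpx V) (n : ℕ) : Type _ :=
  {s : Finset V // s ∉ X.faces ∧ s.card = n} →₀ ℚ

open scoped Classical in
noncomputable def genNF (X : SimplicialCpx V) (n : ℕ) (s : Finset V) : X.NF n :=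
  if h : s ∉ X.faces ∧ s.card = n then Finsupp.single ⟨s, h⟩ 1 else 0

lemma genNF_of_spec (X : SimplicialCpx V) {n : ℕ} {s : Finset V} (h1 : s ∉ X.faces)
    (h2 : s.card = n) : X.genNF n s = Finsupp.single ⟨s, ⟨h1, h2⟩⟩ 1 := by
  rw [genNF, dif_pos ⟨h1, h2⟩]

lemma genNF_of_mem (X : SimplicialCpx V) {n : ℕ} {s : Finset V} (h1 : s ∈ X.faces) :
    X.genNF n s = 0 := by
  rw [genNF, dif_neg (fun hc => hc.1 h1)]

lemma genNF_of_card_ne (X : SimplicialCpx V) {n : ℕ} {s : Finset V} (h1 : s.card ≠ n) :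
    X.genNF n s = 0 := by
  rw [genNF, dif_neg (fun hc => h1 hc.2)]

noncomputable def iota (X : SimplicialCpx V) (n : ℕ) : X.Chain n →ₗ[ℚ] (full V).Chain n :=
  Finsupp.lmapDomain ℚ ℚ (fun σ => ⟨σ.1, full_mem _, σ.2.2⟩)

lemma iota_single (X : SimplicialCpx V) (n : ℕ) (σ : {s : Finset V // s ∈ X.faces ∧ s.card = n}) :
    X.iota n (Finsupp.single σ 1) = Finsupp.single ⟨σ.1, full_mem _, σ.2.2⟩ 1 := by
  rw [iota, Finsupp.lmapDomain_apply, Finsupp.mapDomain_single]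

lemma iota_injective (X : SimplicialCpx V) (n : ℕ) : Function.Injective (X.iota n) := by
  apply Finsupp.mapDomain_injective
  intro a b hab
  have h2 := congrArg Subtype.val hab
  exact Subtype.ext h2

lemma iota_gen (X : SimplicialCpx V) (n : ℕ) {s : Finset V} (h1 : s ∈ X.faces) :
    X.iota n (X.gen n s) = (full V).gen n s := by
  by_cases h2 : s.card = n
  · rw [X.gen_of_mem h1 h2, iota_single, (full V).gen_of_mem (full_mem s) h2]
  · rw [X.gen_of_card_ne h2, (full V).gen_of_card_ne h2, map_zero]

noncomputable def pi (X : SimplicialCpx V) (n : ℕ) : (full V).Chain n →ₗ[ℚ] X.NF n :=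
  Finsupp.lsum ℚ fun σ => LinearMap.toSpanSingleton ℚ _ (X.genNF n σ.1)

lemma pi_single (X : SimplicialCpx V) (n : ℕ) (σ : {s : Finset V // s ∈ (full V).faces ∧ s.card = n}) :
    X.pi n (Finsupp.single σ 1) = X.genNF n σ.1 := by
  rw [pi, Finsupp.lsum_single, LinearMap.toSpanSingleton_apply_one]

lemma pi_gen (X : SimplicialCpx V) (n : ℕ) (t : Finset V) :
    X.pi n ((full V).gen n t) = X.genNF n t := by
  by_cases h2 : t.card = n
  · rw [(full V).gen_of_mem (full_mem t) h2, pi_single]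
  · rw [(full V).gen_of_card_ne h2, map_zero, X.genNF_of_card_ne h2]

noncomputable def nfR (X : SimplicialCpx V) (k : ℕ) : X.NF (k+1) →ₗ[ℚ] X.NF k :=
  Finsupp.lsum ℚ fun σ => LinearMap.toSpanSingleton ℚ _
    (∑ v ∈ σ.1, sgn σ.1 v • X.genNF k (σ.1.erase v))

lemma nfR_single (X : SimplicialCpx V) (k : ℕ) (σ : {s : Finset V // s ∉ X.faces ∧ s.card = k + 1}) :
    X.nfR k (Finsupp.single σ 1) = ∑ v ∈ σ.1, sgn σ.1 v • X.genNF k (σ.1.erase v) := by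
  rw [nfR, Finsupp.lsum_single, LinearMap.toSpanSingleton_apply_one]

noncomputable def tau (X : SimplicialCpx V) (n : ℕ) : X.NF n →ₗ[ℚ] (full V).Chain n :=
  Finsupp.lmapDomain ℚ ℚ (fun σ => ⟨σ.1, full_mem _, σ.2.2⟩)

lemma tau_single (X : SimplicialCpx V) (n : ℕ) (σ : {s : Finset V // s ∉ X.faces ∧ s.card = n}) :
    X.tau n (Finsupp.single σ 1) = Finsupp.single ⟨σ.1, full_mem _, σ.2.2⟩ 1 := by
  rw [tau, Finsupp.lmapDomain_apply, Finsupp.mapDomain_single]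

noncomputable def rho (X : SimplicialCpx V) (n : ℕ) : (full V).Chain n →ₗ[ℚ] X.Chain n :=
  Finsupp.lsum ℚ fun σ => LinearMap.toSpanSingleton ℚ _ (X.gen n σ.1)

lemma rho_single (X : SimplicialCpx V) (n : ℕ) (σ : {s : Finset V // s ∈ (full V).faces ∧ s.card = n}) :
    X.rho n (Finsupp.single σ 1) = X.gen n σ.1 := by
  rw [rho, Finsupp.lsum_single, LinearMap.toSpanSingleton_apply_one]

lemma comm_iota (X : SimplicialCpx V) (n : ℕ) :
    ((full V).bdry n).comp (X.iota (n+1)) = (X.iota n).comp (X.bdry n) := by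
  apply lhom_single_ext
  intro σ
  rw [LinearMap.comp_apply, LinearMap.comp_apply, iota_single, bdry_single, bdry_single,
    map_sum]
  refine Finset.sum_congr rfl fun v hv => ?_
  rw [map_smul, X.iota_gen n (X.down_closed _ σ.2.1 _ (Finset.erase_subset _ _))]

lemma comm_pi (X : SimplicialCpx V) (n : ℕ) :
    (X.pi n).comp ((full V).bdry n) = (X.nfR n).comp (X.pi (n+1)) := by
  apply lhom_single_ext
  intro σ
  rw [LinearMap.comp_apply, LinearMap.comp_apply, pi_single, bdry_single, map_sum]
  have lhs : ∀ v ∈ σ.1, X.pi n (sgn σ.1 v • (full V).gen n (σ.1.erase v)) =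
      sgn σ.1 v • X.genNF n (σ.1.erase v) := fun v hv => by rw [map_smul, pi_gen]
  rw [Finset.sum_congr rfl lhs]
  by_cases hf : σ.1 ∈ X.faces
  · rw [X.genNF_of_mem hf, map_zero]
    refine Finset.sum_eq_zero fun v hv => ?_
    rw [X.genNF_of_mem (X.down_closed _ hf _ (Finset.erase_subset _ _)), smul_zero]
  · rw [X.genNF_of_spec hf σ.2.2, nfR_single]

lemma pi_comp_iota (X : SimplicialCpx V) (n : ℕ) : (X.pi n).comp (X.iota n) = 0 := by
  apply lhom_single_ext
  intro σ
  rw [LinearMap.comp_apply, iota_single, pi_single, X.genNF_of_mem σ.2.1,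
    LinearMap.zero_apply]

lemma pi_comp_tau (X : SimplicialCpx V) (n : ℕ) : (X.pi n).comp (X.tau n) = LinearMap.id := by
  apply lhom_single_ext
  intro σ
  rw [LinearMap.comp_apply, tau_single, pi_single, X.genNF_of_spec σ.2.1 σ.2.2,
    LinearMap.id_apply]

lemma split_id (X : SimplicialCpx V) (n : ℕ) :
    (X.iota n).comp (X.rho n) + (X.tau n).comp (X.pi n) = LinearMap.id := by
  apply lhom_single_ext
  intro σ
  rw [LinearMap.add_apply, LinearMap.comp_apply, LinearMap.comp_apply, rho_single, pi_single,
    LinearMap.id_apply]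
  by_cases hf : σ.1 ∈ X.faces
  · rw [X.gen_of_mem hf σ.2.2, iota_single, X.genNF_of_mem hf, map_zero, add_zero]
  · rw [X.gen_of_not_mem hf, map_zero, zero_add, X.genNF_of_spec hf σ.2.2, tau_single]

lemma ker_pi (X : SimplicialCpx V) (n : ℕ) :
    LinearMap.ker (X.pi n) = LinearMap.range (X.iota n) := by
  apply le_antisymm
  · intro z hz
    have := LinearMap.congr_fun (X.split_id n) z
    rw [LinearMap.add_apply, LinearMap.comp_apply, LinearMap.comp_apply, LinearMap.id_apply,
      LinearMap.mem_ker.1 hz, map_zero, add_zero] at this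
    exact ⟨X.rho n z, this⟩
  · rintro z ⟨w, rfl⟩
    exact LinearMap.mem_ker.2 (LinearMap.congr_fun (X.pi_comp_iota n) w)

lemma range_pi (X : SimplicialCpx V) (n : ℕ) : LinearMap.range (X.pi n) = ⊤ :=
  LinearMap.range_eq_top.2 fun z => ⟨X.tau n z, LinearMap.congr_fun (X.pi_comp_tau n) z⟩

end SimplicialCpx

namespace SimplicialCpx
open Module
variable {V : Type*} [LinearOrder V] [Fintype V]

lemma exact_full (v0 : V) (hv0 : ∀ u : V, v0 ≤ u) (k : ℕ) :
    LinearMap.ker ((full V).bdry k) = LinearMap.range ((full V).bdry (k+1)) := by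
  apply le_antisymm
  · intro z hz
    have h1 := LinearMap.congr_fun (homotopy_succ v0 hv0 k) z
    rw [LinearMap.add_apply, LinearMap.comp_apply, LinearMap.comp_apply, LinearMap.id_apply,
      LinearMap.mem_ker.1 hz, map_zero, add_zero] at h1
    exact ⟨_, h1⟩
  · rintro z ⟨w, rfl⟩
    exact LinearMap.mem_ker.2 (LinearMap.congr_fun ((full V).bdry_bdry k) w)

lemma range_bdry0 (v0 : V) (hv0 : ∀ u : V, v0 ≤ u) :
    LinearMap.range ((full V).bdry 0) = ⊤ :=
  LinearMap.range_eq_top.2 fun z => ⟨hmt v0 0 z, LinearMap.congr_fun (homotopy_zero v0 hv0) z⟩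

lemma map_inf_rank {M N : Type*} [AddCommGroup M] [Module ℚ M] [AddCommGroup N] [Module ℚ N]
    [Module.Finite ℚ M] (f : M →ₗ[ℚ] N) (p : Submodule ℚ M) :
    finrank ℚ (Submodule.map f p) + finrank ℚ ↥(p ⊓ LinearMap.ker f) = finrank ℚ p := by
  have h1 := LinearMap.finrank_range_add_finrank_ker (f.comp p.subtype)
  rw [LinearMap.range_comp, Submodule.range_subtype, LinearMap.ker_comp] at h1
  have h2 := Submodule.finrank_map_subtype_eq p (Submodule.comap p.subtype (LinearMap.ker f))
  rw [Submodule.map_comap_subtype] at h2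
  omega

lemma rank_nfR (X : SimplicialCpx V) (k : ℕ) :
    finrank ℚ (LinearMap.range (X.nfR k)) +
      finrank ℚ ↥(LinearMap.range ((full V).bdry k) ⊓ LinearMap.range (X.iota k)) =
      finrank ℚ (LinearMap.range ((full V).bdry k)) := by
  have h1 : LinearMap.range (X.nfR k) =
      Submodule.map (X.pi k) (LinearMap.range ((full V).bdry k)) := by
    rw [← LinearMap.range_comp_of_range_eq_top (X.nfR k) (X.range_pi (k+1)), ← comm_pi,
      LinearMap.range_comp]
  rw [h1, ← ker_pi]
  exact map_inf_rank (X.pi k) _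

lemma dB_succ (X : SimplicialCpx V) (v0 : V) (hv0 : ∀ u : V, v0 ≤ u) (k : ℕ) :
    finrank ℚ ↥(LinearMap.range ((full V).bdry (k+1)) ⊓ LinearMap.range (X.iota (k+1))) +
      finrank ℚ (LinearMap.range (X.bdry k)) = finrank ℚ (X.Chain (k+1)) := by
  have hkey : LinearMap.range ((full V).bdry (k+1)) ⊓ LinearMap.range (X.iota (k+1)) =
      Submodule.map (X.iota (k+1)) (LinearMap.ker (X.bdry k)) := by
    rw [← exact_full v0 hv0 k]
    ext z
    constructor
    · rintro ⟨hz, x, rfl⟩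
      refine Submodule.mem_map.2 ⟨x, LinearMap.mem_ker.2 (X.iota_injective k ?_), rfl⟩
      rw [← LinearMap.comp_apply, ← comm_iota, LinearMap.comp_apply,
        LinearMap.mem_ker.1 hz, map_zero]
    · rintro ⟨x, hx, rfl⟩
      refine ⟨LinearMap.mem_ker.2 ?_, ⟨x, rfl⟩⟩
      rw [← LinearMap.comp_apply, comm_iota, LinearMap.comp_apply, LinearMap.mem_ker.1 hx,
        map_zero]
  rw [hkey]
  have h2 : finrank ℚ (Submodule.map (X.iota (k+1)) (LinearMap.ker (X.bdry k))) =
      finrank ℚ (LinearMap.ker (X.bdry k)) :=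
    (Submodule.equivMapOfInjective _ (X.iota_injective (k+1)) _).finrank_eq.symm
  rw [h2, add_comm]
  exact LinearMap.finrank_range_add_finrank_ker (X.bdry k)

lemma chain_zero_dim (X : SimplicialCpx V) : finrank ℚ (X.Chain 0) = 1 := by
  haveI : Unique {s : Finset V // s ∈ X.faces ∧ s.card = 0} :=
    ⟨⟨⟨∅, X.empty_mem, Finset.card_empty⟩⟩, fun σ => Subtype.ext (Finset.card_eq_zero.1 σ.2.2)⟩
  rw [(Finsupp.LinearEquiv.finsuppUnique ℚ ℚ _).finrank_eq, Module.finrank_self]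

lemma chain_empty_dim (X : SimplicialCpx V) (k : ℕ)
    (h : ∀ s : Finset V, s ∈ X.faces → s.card ≠ k) : finrank ℚ (X.Chain k) = 0 := by
  haveI : IsEmpty {s : Finset V // s ∈ X.faces ∧ s.card = k} := ⟨fun σ => h σ.1 σ.2.1 σ.2.2⟩
  exact Module.finrank_zero_of_subsingleton

lemma dB_zero (X : SimplicialCpx V) (v0 : V) (hv0 : ∀ u : V, v0 ≤ u) :
    finrank ℚ ↥(LinearMap.range ((full V).bdry 0) ⊓ LinearMap.range (X.iota 0)) = 1 := by
  rw [range_bdry0 v0 hv0, top_inf_eq, LinearMap.finrank_range_of_inj (X.iota_injective 0),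
    chain_zero_dim]

lemma a_sum (v0 : V) (hv0 : ∀ u : V, v0 ≤ u) (k : ℕ) :
    finrank ℚ (LinearMap.range ((full V).bdry k)) +
      finrank ℚ (LinearMap.range ((full V).bdry (k+1))) =
      finrank ℚ ((full V).Chain (k+1)) := by
  rw [← exact_full v0 hv0 k, add_comm]
  rw [add_comm]
  exact LinearMap.finrank_range_add_finrank_ker ((full V).bdry k)

lemma counting (X : SimplicialCpx V) (n : ℕ) :
    finrank ℚ (X.Chain n) + finrank ℚ (X.NF n) = finrank ℚ ((full V).Chain n) := by
  have h1 := LinearMap.finrank_range_add_finrank_ker (X.pi n)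
  rw [X.range_pi n, X.ker_pi n, finrank_top, LinearMap.finrank_range_of_inj (X.iota_injective n)]
    at h1
  omega

lemma range_bdry_le_cycles (X : SimplicialCpx V) (k : ℕ) :
    LinearMap.range (X.bdry k) ≤ X.cycles k := by
  cases k with
  | zero => exact le_top
  | succ l =>
    rintro z ⟨w, rfl⟩
    exact LinearMap.mem_ker.2 (LinearMap.congr_fun (X.bdry_bdry l) w)

set_option synthInstance.maxHeartbeats 1000000 in
set_option maxHeartbeats 1000000 in
lemma redH_dim (X : SimplicialCpx V) (k : ℕ) :
    finrank ℚ (X.redH k) + finrank ℚ (LinearMap.range (X.bdry k)) =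
      finrank ℚ (X.cycles k) := by
  have h2 : finrank ℚ ↥(Submodule.comap (X.cycles k).subtype (LinearMap.range (X.bdry k))) =
      finrank ℚ (LinearMap.range (X.bdry k)) :=
    (Submodule.comapSubtypeEquivOfLe (X.range_bdry_le_cycles k)).finrank_eq
  rw [← h2]
  exact Submodule.finrank_quotient_add_finrank _

lemma cyc_zero_dim (X : SimplicialCpx V) : finrank ℚ (X.cycles 0) = finrank ℚ (X.Chain 0) := by
  rw [show X.cycles 0 = ⊤ from rfl, finrank_top]

lemma cyc_succ_dim (X : SimplicialCpx V) (l : ℕ) :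
    finrank ℚ (X.cycles (l+1)) + finrank ℚ (LinearMap.range (X.bdry l)) =
      finrank ℚ (X.Chain (l+1)) := by
  rw [show X.cycles (l+1) = LinearMap.ker (X.bdry l) from rfl, add_comm]
  exact LinearMap.finrank_range_add_finrank_ker (X.bdry l)

end SimplicialCpx

namespace SimplicialCpx
open Module Finset
variable {V : Type*} [LinearOrder V] [Fintype V]

def pos (v : V) : ℕ := (Finset.univ.filter (· < v)).card

noncomputable def eps (s : Finset V) : ℚ := ∏ w ∈ s, (-1 : ℚ) ^ pos w

lemma eps_mul {s : Finset V} {v : V} (hv : v ∈ s) :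
    eps s = (-1 : ℚ) ^ pos v * eps (s.erase v) := (Finset.mul_prod_erase s _ hv).symm

lemma eps_sq (s : Finset V) : eps s * eps s = 1 := by
  rw [eps, ← Finset.prod_mul_distrib]
  refine Finset.prod_eq_one fun w _ => ?_
  rw [← mul_pow]; norm_num

lemma sgn_sq (s : Finset V) (v : V) : sgn s v * sgn s v = 1 := by
  rw [sgn, ← mul_pow]; norm_num

lemma sgn_compl {T : Finset V} {v : V} (hv : v ∈ T) :
    sgn T v * sgn (insert v (Finset.univ \ T)) v = (-1 : ℚ) ^ pos v := by
  rw [sgn, sgn, Finset.filter_insert, if_neg (lt_irrefl v), ← pow_add]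
  congr 1
  have hsplit : Finset.univ.filter (· < v) =
      T.filter (· < v) ∪ (Finset.univ \ T).filter (· < v) := by
    rw [← Finset.filter_union, Finset.union_sdiff_of_subset (Finset.subset_univ T)]
  rw [pos, hsplit, Finset.card_union_of_disjoint
    (Finset.disjoint_filter_filter Finset.disjoint_sdiff)]

lemma sgn_eps_key {T : Finset V} {v : V} (hv : v ∈ T) :
    sgn T v * eps (T.erase v) = eps T * sgn (insert v (Finset.univ \ T)) v := by
  rw [eps_mul hv]
  have h2 := sgn_compl hv
  have hsq := sgn_sq (insert v (Finset.univ \ T)) v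
  set a := sgn T v
  set b := sgn (insert v (Finset.univ \ T)) v
  set e := eps (T.erase v)
  linear_combination e * b * h2 - e * a * hsq

variable (X : SimplicialCpx V) (hX : (Finset.univ : Finset V) ∉ X.faces)

noncomputable def phi (k l : ℕ) : (X.dual hX).Chain k →ₗ[ℚ] X.NF l :=
  Finsupp.lsum ℚ fun T => LinearMap.toSpanSingleton ℚ _
    (eps T.1 • X.genNF l (Finset.univ \ T.1))

noncomputable def phiInv (l k : ℕ) : X.NF l →ₗ[ℚ] (X.dual hX).Chain k :=
  Finsupp.lsum ℚ fun S => LinearMap.toSpanSingleton ℚ _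
    (eps (Finset.univ \ S.1) • (X.dual hX).gen k (Finset.univ \ S.1))

lemma phi_single (k l : ℕ) (T : {s : Finset V // s ∈ (X.dual hX).faces ∧ s.card = k}) :
    X.phi hX k l (Finsupp.single T 1) = eps T.1 • X.genNF l (Finset.univ \ T.1) := by
  rw [phi, Finsupp.lsum_single, LinearMap.toSpanSingleton_apply_one]

lemma phiInv_single (l k : ℕ) (S : {s : Finset V // s ∉ X.faces ∧ s.card = l}) :
    X.phiInv hX l k (Finsupp.single S 1) =
      eps (Finset.univ \ S.1) • (X.dual hX).gen k (Finset.univ \ S.1) := by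
  rw [phiInv, Finsupp.lsum_single, LinearMap.toSpanSingleton_apply_one]

lemma compl_card {t : Finset V} {k l : ℕ} (hkl : k + l = Fintype.card V) (ht : t.card = k) :
    (Finset.univ \ t).card = l := by
  rw [Finset.card_sdiff_of_subset (Finset.subset_univ t), Finset.card_univ, ht]
  omega

lemma dual_face_compl {t : Finset V} (ht : t ∈ (X.dual hX).faces) :
    Finset.univ \ t ∉ X.faces := ht

lemma phi_gen {k l : ℕ} (hkl : k + l = Fintype.card V) {t : Finset V}
    (ht : t ∈ (X.dual hX).faces) (hc : t.card = k) :
    X.phi hX k l ((X.dual hX).gen k t) = eps t • X.genNF l (Finset.univ \ t) := by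
  rw [(X.dual hX).gen_of_mem ht hc, phi_single]

lemma phi_phiInv (k l : ℕ) (hkl : k + l = Fintype.card V) :
    (X.phi hX k l).comp (X.phiInv hX l k) = LinearMap.id := by
  apply lhom_single_ext
  intro S
  have hdf : Finset.univ \ S.1 ∈ (X.dual hX).faces := by
    show Finset.univ \ (Finset.univ \ S.1) ∉ X.faces
    rw [Finset.sdiff_sdiff_eq_self (Finset.subset_univ S.1)]
    exact S.2.1
  rw [LinearMap.comp_apply, phiInv_single, map_smul,
    X.phi_gen hX (l := l) hkl hdf (compl_card (by omega) S.2.2), smul_smul, eps_sq,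
    Finset.sdiff_sdiff_eq_self (Finset.subset_univ S.1), one_smul,
    X.genNF_of_spec S.2.1 S.2.2, LinearMap.id_apply]

lemma phiInv_phi (k l : ℕ) (hkl : k + l = Fintype.card V) :
    (X.phiInv hX l k).comp (X.phi hX k l) = LinearMap.id := by
  apply lhom_single_ext
  intro T
  rw [LinearMap.comp_apply, phi_single, map_smul,
    X.genNF_of_spec (X.dual_face_compl hX T.2.1) (compl_card hkl T.2.2), phiInv_single,
    Finset.sdiff_sdiff_eq_self (Finset.subset_univ T.1), smul_smul, eps_sq,
    one_smul, (X.dual hX).gen_of_mem T.2.1 T.2.2, LinearMap.id_apply]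

noncomputable def phiEquiv (k l : ℕ) (hkl : k + l = Fintype.card V) :
    (X.dual hX).Chain k ≃ₗ[ℚ] X.NF l :=
  LinearEquiv.ofLinear (X.phi hX k l) (X.phiInv hX l k) (X.phi_phiInv hX k l hkl)
    (X.phiInv_phi hX k l hkl)

noncomputable def coB (l : ℕ) : X.NF l →ₗ[ℚ] X.NF (l+1) :=
  Finsupp.lsum ℚ fun S => LinearMap.toSpanSingleton ℚ _
    (∑ v ∈ Finset.univ \ S.1, sgn (insert v S.1) v • X.genNF (l+1) (insert v S.1))

lemma coB_single (l : ℕ) (S : {s : Finset V // s ∉ X.faces ∧ s.card = l}) :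
    X.coB l (Finsupp.single S 1) =
      ∑ v ∈ Finset.univ \ S.1, sgn (insert v S.1) v • X.genNF (l+1) (insert v S.1) := by
  rw [coB, Finsupp.lsum_single, LinearMap.toSpanSingleton_apply_one]

lemma conj_bdry (n l : ℕ) (hnl : (n + 1) + l = Fintype.card V) :
    (X.phi hX n (l+1)).comp ((X.dual hX).bdry n) =
      (X.coB l).comp (X.phi hX (n+1) l) := by
  apply lhom_single_ext
  intro T
  rw [LinearMap.comp_apply, LinearMap.comp_apply, bdry_single, map_sum, phi_single,
    X.genNF_of_spec (X.dual_face_compl hX T.2.1) (compl_card hnl T.2.2), map_smul,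
    coB_single, Finset.smul_sum]
  have hcompl : Finset.univ \ (Finset.univ \ T.1) = T.1 :=
    Finset.sdiff_sdiff_eq_self (Finset.subset_univ T.1)
  rw [Finset.sum_congr hcompl (fun v hv => rfl)]
  refine Finset.sum_congr rfl fun v hv => ?_
  have hvT : v ∈ T.1 := hv
  have herase : Finset.univ \ (T.1.erase v) = insert v (Finset.univ \ T.1) :=
    Finset.sdiff_erase (Finset.mem_univ v)
  rw [map_smul, X.phi_gen hX (l := l + 1) (by omega)
      ((X.dual hX).down_closed _ T.2.1 _ (Finset.erase_subset _ _))
      (by rw [Finset.card_erase_of_mem hvT, T.2.2]; rfl),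
    herase, smul_smul, smul_smul, sgn_eps_key hvT]

end SimplicialCpx

namespace SimplicialCpx
open Module
variable {V : Type*} [LinearOrder V] [Fintype V]

noncomputable def toM {α β : Type*} [Fintype α] [Fintype β]
    (f : (α →₀ ℚ) →ₗ[ℚ] (β →₀ ℚ)) : Matrix β α ℚ := fun b a => f (Finsupp.single a 1) b

lemma toM_mulVecLin {α β : Type*} [Fintype α] [Fintype β] [DecidableEq α]
    (f : (α →₀ ℚ) →ₗ[ℚ] (β →₀ ℚ)) :
    (toM f).mulVecLin = (Finsupp.linearEquivFunOnFinite ℚ ℚ β).toLinearMap.comp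
      (f.comp (Finsupp.linearEquivFunOnFinite ℚ ℚ α).symm.toLinearMap) := by
  apply LinearMap.pi_ext'
  intro a
  apply LinearMap.ext
  intro c
  rw [LinearMap.comp_apply, LinearMap.comp_apply, LinearMap.comp_apply, LinearMap.comp_apply]
  have h1 : (LinearMap.single ℚ (fun _ : α => ℚ) a) c = Pi.single a c := rfl
  have h2 : ((Finsupp.linearEquivFunOnFinite ℚ ℚ α).symm.toLinearMap) (Pi.single a c) =
      Finsupp.single a c := by
    show (Finsupp.linearEquivFunOnFinite ℚ ℚ α).symm (Pi.single a c) = Finsupp.single a c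
    rw [LinearEquiv.symm_apply_eq, Finsupp.linearEquivFunOnFinite_single]
  rw [h1, h2, Matrix.mulVecLin_apply, Matrix.mulVec_single]
  have h3 : (Finsupp.single a c : α →₀ ℚ) = c • Finsupp.single a 1 := by
    rw [Finsupp.smul_single, smul_eq_mul, mul_one]
  rw [h3, map_smul, map_smul]
  funext b
  show toM f b a * c = ((Finsupp.linearEquivFunOnFinite ℚ ℚ β) (c • f (Finsupp.single a 1))) b
  have h4 : ∀ (z : β →₀ ℚ), (Finsupp.linearEquivFunOnFinite ℚ ℚ β) z = ⇑z := fun z => rfl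
  rw [h4, Finsupp.coe_smul, Pi.smul_apply, smul_eq_mul, toM, mul_comm]

lemma rank_toM {α β : Type*} [Fintype α] [Fintype β] [DecidableEq α]
    (f : (α →₀ ℚ) →ₗ[ℚ] (β →₀ ℚ)) :
    (toM f).rank = finrank ℚ (LinearMap.range f) := by
  rw [Matrix.rank, toM_mulVecLin, LinearMap.range_comp,
    LinearMap.range_comp_of_range_eq_top f (LinearEquiv.range _)]
  exact LinearEquiv.finrank_map_eq _ _

lemma genNF_apply (X : SimplicialCpx V) (n : ℕ) (t : Finset V)
    (σ : {s : Finset V // s ∉ X.faces ∧ s.card = n}) :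
    (X.genNF n t) σ = if t = σ.1 then 1 else 0 := by
  by_cases ht : t = σ.1
  · subst ht
    rw [X.genNF_of_spec σ.2.1 σ.2.2, if_pos rfl]
    exact Finsupp.single_eq_same
  · rw [if_neg ht]
    by_cases hc : t ∉ X.faces ∧ t.card = n
    · rw [X.genNF_of_spec hc.1 hc.2]
      exact Finsupp.single_eq_of_ne' (fun hcon => ht (congrArg Subtype.val hcon))
    · rcases not_and_or.1 hc with hc1 | hc2
      · rw [X.genNF_of_mem (not_not.1 hc1)]; rfl
      · rw [X.genNF_of_card_ne hc2]; rfl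

lemma toM_coB_transpose (X : SimplicialCpx V) (l : ℕ)
    [Fintype {s : Finset V // s ∉ X.faces ∧ s.card = l}]
    [Fintype {s : Finset V // s ∉ X.faces ∧ s.card = l + 1}] :
    toM (X.coB l) = (toM (X.nfR l)).transpose := by
  funext S' S
  show X.coB l (Finsupp.single S 1) S' = X.nfR l (Finsupp.single S' 1) S
  rw [coB_single, nfR_single, Finsupp.finset_sum_apply, Finsupp.finset_sum_apply]
  have e1 : ∀ v, (sgn (insert v S.1) v • X.genNF (l+1) (insert v S.1)) S' =
      if insert v S.1 = S'.1 then sgn (insert v S.1) v else 0 := fun v => by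
    rw [Finsupp.smul_apply, genNF_apply, smul_eq_mul, mul_ite, mul_one, mul_zero]
  have e2 : ∀ v, (sgn S'.1 v • X.genNF l (S'.1.erase v)) S =
      if S'.1.erase v = S.1 then sgn S'.1 v else 0 := fun v => by
    rw [Finsupp.smul_apply, genNF_apply, smul_eq_mul, mul_ite, mul_one, mul_zero]
  rw [Finset.sum_congr rfl (fun v _ => e1 v), Finset.sum_congr rfl (fun v _ => e2 v),
    ← Finset.sum_filter, ← Finset.sum_filter]
  have hset : (Finset.univ \ S.1).filter (fun v => insert v S.1 = S'.1) =
      S'.1.filter (fun v => S'.1.erase v = S.1) := by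
    ext v
    simp only [Finset.mem_filter, Finset.mem_sdiff, Finset.mem_univ, true_and]
    constructor
    · rintro ⟨hv, hins⟩
      exact ⟨hins ▸ Finset.mem_insert_self v S.1, by rw [← hins, Finset.erase_insert hv]⟩
    · rintro ⟨hv, hers⟩
      exact ⟨by rw [← hers]; exact Finset.notMem_erase v S'.1,
        by rw [← hers, Finset.insert_erase hv]⟩
  rw [Finset.sum_congr hset (fun v hv => ?_)]
  have hins : insert v S.1 = S'.1 := by
    rcases Finset.mem_filter.1 hv with ⟨hv1, hv2⟩
    rw [← hv2, Finset.insert_erase hv1]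
  rw [hins]

lemma rank_dual_bdry (X : SimplicialCpx V) (hX : (Finset.univ : Finset V) ∉ X.faces)
    (n l : ℕ) (hnl : n + l + 1 = Fintype.card V) :
    finrank ℚ (LinearMap.range ((X.dual hX).bdry n)) =
      finrank ℚ (LinearMap.range (X.nfR l)) := by
  letI : Fintype {s : Finset V // s ∉ X.faces ∧ s.card = l} := Fintype.ofFinite _
  letI : Fintype {s : Finset V // s ∉ X.faces ∧ s.card = l + 1} := Fintype.ofFinite _
  have hconj := X.conj_bdry hX n l (by omega)
  have h1 : finrank ℚ (LinearMap.range ((X.dual hX).bdry n)) =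
      finrank ℚ (Submodule.map (X.phi hX n (l+1))
        (LinearMap.range ((X.dual hX).bdry n))) :=
    (Submodule.equivMapOfInjective _
      ((X.phiEquiv hX n (l+1) (by omega)).injective) _).finrank_eq
  have h2 : Submodule.map (X.phi hX n (l+1)) (LinearMap.range ((X.dual hX).bdry n)) =
      LinearMap.range (X.coB l) := by
    have hsurj : LinearMap.range (X.phi hX (n+1) l) = ⊤ :=
      LinearMap.range_eq_top.2 (X.phiEquiv hX (n+1) l (by omega)).surjective
    rw [← LinearMap.range_comp, hconj, LinearMap.range_comp_of_range_eq_top (X.coB l) hsurj]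
  have h3 : finrank ℚ (LinearMap.range (X.coB l)) =
      finrank ℚ (LinearMap.range (X.nfR l)) := by
    rw [← rank_toM, ← rank_toM, X.toM_coB_transpose l, Matrix.rank_transpose]
  rw [h1, h2, h3]

lemma dual_chain_dim (X : SimplicialCpx V) (hX : (Finset.univ : Finset V) ∉ X.faces)
    (k l : ℕ) (hkl : k + l = Fintype.card V) :
    finrank ℚ ((X.dual hX).Chain k) = finrank ℚ (X.NF l) :=
  (X.phiEquiv hX k l hkl).finrank_eq

end SimplicialCpx

namespace SimplicialCpx
open Module
variable {V : Type*} [LinearOrder V] [Fintype V]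

lemma chain_top_dim (X : SimplicialCpx V) (hX : (Finset.univ : Finset V) ∉ X.faces) :
    finrank ℚ (X.Chain (Fintype.card V)) = 0 :=
  X.chain_empty_dim _ (fun s hs hc => hX (by rwa [Finset.eq_univ_of_card s hc] at hs))

lemma nf_empty_dim (X : SimplicialCpx V) : finrank ℚ (X.NF (Fintype.card V + 1)) = 0 := by
  haveI : IsEmpty {s : Finset V // s ∉ X.faces ∧ s.card = Fintype.card V + 1} := ⟨fun σ => by
    have hle := Finset.card_le_univ σ.1
    have h2 := σ.2.2
    omega⟩
  exact Module.finrank_zero_of_subsingleton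

lemma nfR_top_rank (X : SimplicialCpx V) :
    finrank ℚ (LinearMap.range (X.nfR (Fintype.card V))) = 0 := by
  have h1 := LinearMap.finrank_range_add_finrank_ker (X.nfR (Fintype.card V))
  rw [X.nf_empty_dim] at h1
  omega

lemma homology_eq_dB (X : SimplicialCpx V) (v0 : V) (hv0 : ∀ u : V, v0 ≤ u) (m : ℕ) :
    finrank ℚ (X.redH m) + finrank ℚ (LinearMap.range (X.bdry m)) =
      finrank ℚ ↥(LinearMap.range ((full V).bdry m) ⊓ LinearMap.range (X.iota m)) := by
  rw [X.redH_dim m]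
  cases m with
  | zero => rw [X.cyc_zero_dim, X.chain_zero_dim, X.dB_zero v0 hv0]
  | succ l =>
    have h1 := X.cyc_succ_dim l
    have h2 := X.dB_succ v0 hv0 l
    omega

end SimplicialCpx

open Module in
/-- **Combinatorial Alexander duality.** For a simplicial complex `X` on a finite
vertex set `V` with `V ∉ X`, one has `H̃ᵢ(X^⋆;ℚ) ≅ H̃_{|V|-i-3}(X;ℚ)` for all
`-1 ≤ i ≤ |V| - 2`.  (In our indexing, `redH n` is `H̃_{n-1}`, so the degrees
`i = n - 1` and `|V| - i - 3 = m - 1` correspond to indices with `n + m + 1 = |V|`.) -/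
theorem alexander_duality {V : Type*} [LinearOrder V] [Fintype V]
    (X : SimplicialCpx V) (h : (Finset.univ : Finset V) ∉ X.faces)
    (n m : ℕ) (hnm : n + m + 1 = Fintype.card V) :
    Nonempty ((X.dual h).redH n ≃ₗ[ℚ] X.redH m) := by
  classical
  haveI hNV : Nonempty V := Fintype.card_pos_iff.1 (by omega)
  have hne : (Finset.univ : Finset V).Nonempty := Finset.univ_nonempty
  set v0 := (Finset.univ : Finset V).min' hne with hv0def
  have hv0 : ∀ u : V, v0 ≤ u := fun u => Finset.min'_le _ u (Finset.mem_univ u)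
  haveI i1 : Module.Finite ℚ ((X.dual h).redH n) :=
    inferInstanceAs (Module.Finite ℚ (((X.dual h).cycles n) ⧸
      (Submodule.comap ((X.dual h).cycles n).subtype (LinearMap.range ((X.dual h).bdry n)))))
  haveI i2 : Module.Finite ℚ (X.redH m) :=
    inferInstanceAs (Module.Finite ℚ ((X.cycles m) ⧸
      (Submodule.comap (X.cycles m).subtype (LinearMap.range (X.bdry m)))))
  refine ⟨LinearEquiv.ofFinrankEq _ _ ?_⟩
  have hF1 := (X.dual h).redH_dim n
  have hF3 := X.rank_dual_bdry h n m hnm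
  have hF5 := X.rank_nfR m
  have hF6 := X.rank_nfR (m+1)
  have hF7 := SimplicialCpx.a_sum (V := V) v0 hv0 m
  have hF8 := X.counting (m+1)
  have hF9 := X.dB_succ v0 hv0 m
  have hF12 := X.dual_chain_dim h n (m+1) (by omega)
  have hXside := X.homology_eq_dB v0 hv0 m
  cases n with
  | zero =>
    have hcyc := (X.dual h).cyc_zero_dim
    have hq1 : finrank ℚ (LinearMap.range (X.nfR (m+1))) = 0 := by
      have hEq : m + 1 = Fintype.card V := by omega
      rw [hEq]; exact X.nfR_top_rank
    have hf0 : finrank ℚ (X.Chain (m+1)) = 0 := by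
      have hEq : m + 1 = Fintype.card V := by omega
      rw [hEq]; exact X.chain_top_dim h
    omega
  | succ t =>
    have hcyc := (X.dual h).cyc_succ_dim t
    have hF4 := X.rank_dual_bdry h t (m+1) (by omega)
    omega
end

section
/- Let N be a matroid on ground set V with rank function ρ, and let Y be its independence complex. Then for every non-empty S ⊆ V, the induced subcomplex Y[S] satisfies η(Y[S]) ≥ ρ(S), i.e., H̃_j(Y[S]; ℚ) = 0 for all j < ρ(S) − 1. -/
/-- A matroid on a finite ground set, given by its independent sets. -/
structure FinMatroid (V : Type*) [DecidableEq V] where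
  Indep : Finset V → Prop
  empty_indep : Indep ∅
  indep_subset : ∀ ⦃s t : Finset V⦄, Indep s → t ⊆ s → Indep t
  indep_exchange : ∀ ⦃s t : Finset V⦄, Indep s → Indep t → s.card < t.card →
    ∃ x ∈ t, x ∉ s ∧ Indep (insert x s)

namespace FinMatroid

variable {V : Type*} [DecidableEq V]

/-- The rank function of a matroid: the maximal cardinality of an independent subset. -/
noncomputable def rk (N : FinMatroid V) (S : Finset V) : ℕ :=
  sSup {n | ∃ I : Finset V, I ⊆ S ∧ N.Indep I ∧ I.card = n}

/-- The rank of a matroid on a finite ground set. -/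
noncomputable def rank [Fintype V] (N : FinMatroid V) : ℕ := N.rk Finset.univ

/-- The independence complex of a matroid. -/
def indepComplex (N : FinMatroid V) : SimplicialCpx V where
  faces := {s | N.Indep s}
  down_closed := fun _ hs _ hts => N.indep_subset hs hts
  empty_mem := N.empty_indep

/-- The restriction of a matroid to a subset `S` of the ground set: independent sets
are the independent sets of `N` contained in `S`. -/
def restrict (N : FinMatroid V) (S : Finset V) : FinMatroid V where
  Indep := fun t => N.Indep t ∧ t ⊆ S
  empty_indep := ⟨N.empty_indep, Finset.empty_subset S⟩
  indep_subset := fun s t hs hts => ⟨N.indep_subset hs.1 hts, hts.trans hs.2⟩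
  indep_exchange := fun s t hs ht hcard => by
    obtain ⟨x, hxt, hxs, hx⟩ := N.indep_exchange hs.1 ht.1 hcard
    exact ⟨x, hxt, hxs, hx, Finset.insert_subset (ht.2 hxt) hs.2⟩

/-- A basis of a matroid on a finite ground set: a maximal independent set. -/
def IsBasis [Fintype V] (N : FinMatroid V) (B : Finset V) : Prop :=
  N.Indep B ∧ ∀ B', N.Indep B' → B ⊆ B' → B = B'

end FinMatroid

/-! ### Auxiliary machinery for the proof -/

namespace MICAux

open Finsupp

variable {V : Type*} [LinearOrder V]

/-- The free `ℚ`-module on all finsets of `V` (ungraded chains). -/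
abbrev FM (V : Type*) := Finset V →₀ ℚ

/-- The sign of a vertex `v` relative to a face `s`. -/
noncomputable def sgn (s : Finset V) (v : V) : ℚ := (-1) ^ (s.filter (· < v)).card

lemma sgn_sq (s : Finset V) (v : V) : sgn s v * sgn s v = 1 := by
  simp [sgn, ← pow_add, ← two_mul, pow_mul]

lemma sgn_erase_self (s : Finset V) (v : V) : sgn (s.erase v) v = sgn s v := by
  unfold sgn; rw [Finset.filter_erase, Finset.erase_eq_of_notMem]; simp

lemma sgn_insert_self {s : Finset V} {v : V} : sgn (insert v s) v = sgn s v := by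
  unfold sgn; rw [Finset.filter_insert, if_neg (lt_irrefl v)]

lemma sgn_cancel {s : Finset V} {u v : V} (hu : u ∈ s) (hv : v ∉ s) :
    sgn s v * sgn (insert v s) u = -(sgn s u * sgn (s.erase u) v) := by
  have huv : u ≠ v := fun h => hv (h ▸ hu)
  rcases huv.lt_or_gt with h | h
  · have h1 : sgn (insert v s) u = sgn s u := by
      unfold sgn; rw [Finset.filter_insert, if_neg (not_lt.2 h.le)]
    have hmem : u ∈ s.filter (· < v) := Finset.mem_filter.2 ⟨hu, h⟩
    obtain ⟨b, hb⟩ : ∃ b, (s.filter (· < v)).card = b + 1 :=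
      ⟨(s.filter (· < v)).card - 1, (Nat.succ_pred_eq_of_pos (Finset.card_pos.2 ⟨u, hmem⟩)).symm⟩
    have h3 : sgn (s.erase u) v = (-1) ^ b := by
      unfold sgn
      rw [Finset.filter_erase, Finset.card_erase_of_mem hmem, hb]; simp
    have h4 : sgn s v = -(-1) ^ b := by unfold sgn; rw [hb]; ring
    rw [h1, h3, h4]; ring
  · have h1 : sgn (insert v s) u = -sgn s u := by
      unfold sgn
      rw [Finset.filter_insert, if_pos h, Finset.card_insert_of_notMem
        (fun hc => hv (Finset.mem_filter.1 hc).1)]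
      ring
    have h2 : sgn (s.erase u) v = sgn s v := by
      unfold sgn
      rw [Finset.filter_erase, Finset.erase_eq_of_notMem
        (show u ∉ s.filter (· < v) from fun hc =>
          absurd (Finset.mem_filter.1 hc).2 (not_lt.2 h.le))]
    rw [h1, h2]; ring

/-- The boundary operator on the free module over all finsets. -/
noncomputable def D : FM V →ₗ[ℚ] FM V :=
  Finsupp.lsum ℚ fun s => LinearMap.toSpanSingleton ℚ (FM V)
    (∑ u ∈ s, sgn s u • Finsupp.single (s.erase u) (1 : ℚ))

/-- The cone operator at `v`. -/
noncomputable def hc (v : V) : FM V →ₗ[ℚ] FM V :=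
  Finsupp.lsum ℚ fun s => LinearMap.toSpanSingleton ℚ (FM V)
    (if v ∈ s then 0 else sgn s v • Finsupp.single (insert v s) (1 : ℚ))

/-- The "remove `v` with sign" operator. -/
noncomputable def Ph (v : V) : FM V →ₗ[ℚ] FM V :=
  Finsupp.lsum ℚ fun s => LinearMap.toSpanSingleton ℚ (FM V)
    (if v ∈ s then sgn s v • Finsupp.single (s.erase v) (1 : ℚ) else 0)

/-- Projection onto faces containing `v`. -/
noncomputable def pin (v : V) : FM V →ₗ[ℚ] FM V :=
  Finsupp.lsum ℚ fun s => LinearMap.toSpanSingleton ℚ (FM V)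
    (if v ∈ s then Finsupp.single s (1 : ℚ) else 0)

lemma D_single (s : Finset V) :
    D (Finsupp.single s (1:ℚ)) = ∑ u ∈ s, sgn s u • Finsupp.single (s.erase u) (1:ℚ) := by
  simp [D, Finsupp.lsum_single, LinearMap.toSpanSingleton_apply]

lemma hc_single (v : V) (s : Finset V) :
    hc v (Finsupp.single s (1:ℚ)) =
      if v ∈ s then 0 else sgn s v • Finsupp.single (insert v s) (1:ℚ) := by
  simp [hc, Finsupp.lsum_single, LinearMap.toSpanSingleton_apply]

lemma Ph_single (v : V) (s : Finset V) :
    Ph v (Finsupp.single s (1:ℚ)) =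
      if v ∈ s then sgn s v • Finsupp.single (s.erase v) (1:ℚ) else 0 := by
  simp [Ph, Finsupp.lsum_single, LinearMap.toSpanSingleton_apply]

lemma pin_single (v : V) (s : Finset V) :
    pin v (Finsupp.single s (1:ℚ)) = if v ∈ s then Finsupp.single s (1:ℚ) else 0 := by
  simp [pin, Finsupp.lsum_single, LinearMap.toSpanSingleton_apply]

omit [LinearOrder V] in
lemma fm_ext {M : Type*} [AddCommMonoid M] [Module ℚ M] {φ ψ : FM V →ₗ[ℚ] M}
    (h : ∀ s, φ (Finsupp.single s (1:ℚ)) = ψ (Finsupp.single s (1:ℚ))) : φ = ψ := by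
  apply Finsupp.lhom_ext
  intro a b
  have : (Finsupp.single a b : FM V) = b • Finsupp.single a (1:ℚ) := by
    rw [Finsupp.smul_single, smul_eq_mul, mul_one]
  rw [this, map_smul, map_smul, h]

/-- The chain homotopy identity for the cone operator. -/
lemma cone_identity (v : V) : D.comp (hc v) + (hc v).comp D = LinearMap.id (M := FM V) := by
  apply fm_ext; intro s
  simp only [LinearMap.add_apply, LinearMap.comp_apply, LinearMap.id_apply, hc_single, D_single]
  by_cases hv : v ∈ s
  · rw [if_pos hv, map_zero, map_sum, zero_add]
    rw [Finset.sum_eq_single v]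
    · rw [map_smul, hc_single, if_neg (Finset.notMem_erase v s), sgn_erase_self,
        Finset.insert_erase hv, smul_smul, sgn_sq, one_smul]
    · intro u hu hne
      rw [map_smul, hc_single, if_pos (Finset.mem_erase.2 ⟨fun h => hne h.symm, hv⟩), smul_zero]
    · intro h; exact absurd hv h
  · rw [if_neg hv, map_smul, D_single, Finset.sum_insert hv, Finset.erase_insert hv,
      sgn_insert_self, map_sum]
    have hrw : ∀ u ∈ s, hc v (sgn s u • Finsupp.single (s.erase u) (1:ℚ)) =
        (sgn s u * sgn (s.erase u) v) • Finsupp.single (insert v (s.erase u)) (1:ℚ) := by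
      intro u hu
      rw [map_smul, hc_single, if_neg (fun hx => hv (Finset.mem_of_mem_erase hx)), smul_smul]
    rw [Finset.sum_congr rfl hrw, smul_add, smul_smul, sgn_sq, one_smul, Finset.smul_sum]
    have hrw2 : ∀ u ∈ s, sgn s v • sgn (insert v s) u • Finsupp.single ((insert v s).erase u) (1:ℚ)
        = -((sgn s u * sgn (s.erase u) v) • Finsupp.single (insert v (s.erase u)) (1:ℚ)) := by
      intro u hu
      have hne : v ≠ u := fun h => hv (h ▸ hu)
      rw [Finset.erase_insert_of_ne hne, smul_smul, sgn_cancel hu hv, neg_smul]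
    rw [Finset.sum_congr rfl hrw2, add_assoc, ← Finset.sum_add_distrib]
    simp

/-- `hc v ∘ Ph v` is the projection onto faces containing `v`. -/
lemma hc_Ph (v : V) : (hc v).comp (Ph v) = pin v := by
  apply fm_ext; intro s
  simp only [LinearMap.comp_apply, Ph_single, pin_single]
  by_cases hv : v ∈ s
  · rw [if_pos hv, if_pos hv, map_smul, hc_single, if_neg (Finset.notMem_erase v s),
      sgn_erase_self, Finset.insert_erase hv, smul_smul, sgn_sq, one_smul]
  · rw [if_neg hv, if_neg hv, map_zero]

/-- `Ph v ∘ hc v` is the projection onto faces not containing `v`. -/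
lemma Ph_hc (v : V) : (Ph v).comp (hc v) = LinearMap.id (M := FM V) - pin v := by
  apply fm_ext; intro s
  simp only [LinearMap.comp_apply, hc_single, pin_single, LinearMap.sub_apply, LinearMap.id_apply]
  by_cases hv : v ∈ s
  · rw [if_pos hv, if_pos hv, map_zero, sub_self]
  · rw [if_neg hv, if_neg hv, map_smul, Ph_single, if_pos (Finset.mem_insert_self v s),
      sgn_insert_self, Finset.erase_insert hv, smul_smul, sgn_sq, one_smul, sub_zero]

lemma supp_lsum {vec : Finset V → FM V} {c : FM V} {t : Finset V}
    (ht : t ∈ ((Finsupp.lsum ℚ fun s => LinearMap.toSpanSingleton ℚ (FM V) (vec s)) c).support) :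
    ∃ s ∈ c.support, t ∈ (vec s).support := by
  classical
  have : ((Finsupp.lsum ℚ fun s => LinearMap.toSpanSingleton ℚ (FM V) (vec s)) c) =
      c.sum fun s b => b • vec s := by
    rw [Finsupp.lsum_apply]; rfl
  rw [this] at ht
  have h2 := Finsupp.support_sum ht
  obtain ⟨s, hs, hts⟩ := Finset.mem_biUnion.1 h2
  exact ⟨s, hs, Finsupp.support_smul hts⟩

lemma supp_D {c : FM V} {t : Finset V} (ht : t ∈ (D c).support) :
    ∃ s ∈ c.support, ∃ u ∈ s, t = s.erase u := by
  classical
  obtain ⟨s, hs, hts⟩ := supp_lsum (c := c) (t := t) ht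
  rw [Finsupp.mem_support_iff, Finsupp.finset_sum_apply] at hts
  obtain ⟨u, hu, hne⟩ := Finset.exists_ne_zero_of_sum_ne_zero hts
  refine ⟨s, hs, u, hu, ?_⟩
  by_contra hcon
  exact hne (by rw [Finsupp.smul_apply, Finsupp.single_apply, if_neg (Ne.symm hcon), smul_zero])

lemma supp_hc {v : V} {c : FM V} {t : Finset V} (ht : t ∈ (hc v c).support) :
    ∃ s ∈ c.support, v ∉ s ∧ t = insert v s := by
  classical
  obtain ⟨s, hs, hts⟩ := supp_lsum (c := c) (t := t) ht
  rw [Finsupp.mem_support_iff] at hts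
  by_cases hv : v ∈ s
  · rw [if_pos hv] at hts; simp at hts
  · rw [if_neg hv, Finsupp.smul_apply, Finsupp.single_apply] at hts
    refine ⟨s, hs, hv, ?_⟩
    by_contra hne
    exact hts (by rw [if_neg (Ne.symm hne), smul_zero])

lemma supp_Ph {v : V} {c : FM V} {t : Finset V} (ht : t ∈ (Ph v c).support) :
    ∃ s ∈ c.support, v ∈ s ∧ t = s.erase v := by
  classical
  obtain ⟨s, hs, hts⟩ := supp_lsum (c := c) (t := t) ht
  rw [Finsupp.mem_support_iff] at hts
  by_cases hv : v ∈ s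
  · rw [if_pos hv, Finsupp.smul_apply, Finsupp.single_apply] at hts
    refine ⟨s, hs, hv, ?_⟩
    by_contra hne
    exact hts (by rw [if_neg (Ne.symm hne), smul_zero])
  · rw [if_neg hv] at hts; simp at hts

/-- Pointwise formula for the projection `pin`. -/
lemma pin_apply (v : V) (c : FM V) (t : Finset V) :
    pin v c t = if v ∈ t then c t else 0 := by
  classical
  induction c using Finsupp.induction with
  | zero => simp
  | single_add a b f haf hb ih =>
    have hsingle : pin v (Finsupp.single a b) = if v ∈ a then Finsupp.single a b else 0 := by
      have : (Finsupp.single a b : FM V) = b • Finsupp.single a (1:ℚ) := by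
        rw [Finsupp.smul_single, smul_eq_mul, mul_one]
      rw [this, map_smul, pin_single]
      split_ifs
      · rw [Finsupp.smul_single, smul_eq_mul, mul_one]
      · rw [smul_zero]
    rw [map_add, Finsupp.add_apply, hsingle, ih, Finsupp.add_apply]
    by_cases hvt : v ∈ t
    · rw [if_pos hvt, if_pos hvt]
      by_cases hva : v ∈ a
      · rw [if_pos hva]
      · rw [if_neg hva, Finsupp.coe_zero, Pi.zero_apply, Finsupp.single_apply,
          if_neg (show a ≠ t from fun h => hva (h ▸ hvt))]
    · rw [if_neg hvt, if_neg hvt, add_zero]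
      by_cases hva : v ∈ a
      · rw [if_pos hva, Finsupp.single_apply,
          if_neg (show a ≠ t from fun h => hvt (h ▸ hva))]
      · rw [if_neg hva]; rfl

lemma pin_eq_zero {v : V} {c : FM V} (h : ∀ s ∈ c.support, v ∉ s) : pin v c = 0 := by
  ext t
  rw [pin_apply]
  by_cases hvt : v ∈ t
  · rw [if_pos hvt, Finsupp.coe_zero, Pi.zero_apply]
    by_contra hne
    exact h t (Finsupp.mem_support_iff.2 hne) hvt
  · rw [if_neg hvt]; simp

lemma pin_eq_self {v : V} {c : FM V} (h : ∀ s ∈ c.support, v ∈ s) : pin v c = c := by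
  ext t
  rw [pin_apply]
  by_cases hvt : v ∈ t
  · rw [if_pos hvt]
  · rw [if_neg hvt]
    by_contra hne
    exact hvt (h t (Finsupp.mem_support_iff.2 fun h' => hne h'.symm))

lemma D_eq_zero_of_card_zero {c : FM V} (h : ∀ s ∈ c.support, s = ∅) : D c = 0 := by
  rw [← Finsupp.support_eq_empty]
  by_contra hne
  obtain ⟨t, ht⟩ := Finset.nonempty_iff_ne_empty.2 hne
  obtain ⟨s, hs, u, hu, _⟩ := supp_D ht
  rw [h s hs] at hu
  exact absurd hu (Finset.notMem_empty u)

end MICAux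

namespace MICAux

variable {V : Type*} [LinearOrder V]

lemma rk_bdd (N : FinMatroid V) (S : Finset V) :
    BddAbove {n | ∃ I : Finset V, I ⊆ S ∧ N.Indep I ∧ I.card = n} :=
  ⟨S.card, fun _ ⟨_, hIS, _, hc⟩ => hc ▸ Finset.card_le_card hIS⟩

lemma exists_basis (N : FinMatroid V) (S : Finset V) :
    ∃ B, B ⊆ S ∧ N.Indep B ∧ B.card = N.rk S := by
  have h := Nat.sSup_mem (s := {n | ∃ I : Finset V, I ⊆ S ∧ N.Indep I ∧ I.card = n})
    ⟨0, ∅, Finset.empty_subset S, N.empty_indep, Finset.card_empty⟩ (rk_bdd N S)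
  obtain ⟨I, h1, h2, h3⟩ := h
  exact ⟨I, h1, h2, h3⟩

lemma card_le_rk {N : FinMatroid V} {S I : Finset V} (hIS : I ⊆ S) (hI : N.Indep I) :
    I.card ≤ N.rk S :=
  le_csSup (rk_bdd N S) ⟨I, hIS, hI, rfl⟩

lemma rk_mono {N : FinMatroid V} {S T : Finset V} (h : S ⊆ T) : N.rk S ≤ N.rk T := by
  obtain ⟨B, h1, h2, h3⟩ := exists_basis N S
  exact h3 ▸ card_le_rk (h1.trans h) h2

/-- Extension lemma: any independent set can be grown (inside the union with another
independent set) to at least the size of the latter. -/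
lemma extend {N : FinMatroid V} : ∀ k (I B : Finset V), B.card - I.card ≤ k →
    N.Indep I → N.Indep B →
    ∃ M, N.Indep M ∧ I ⊆ M ∧ M ⊆ I ∪ B ∧ B.card ≤ M.card := by
  intro k
  induction k with
  | zero =>
    intro I B h hI _
    exact ⟨I, hI, subset_refl I, Finset.subset_union_left,
      Nat.le_of_sub_eq_zero (Nat.le_zero.1 h)⟩
  | succ k ih =>
    intro I B h hI hB
    by_cases hcard : B.card ≤ I.card
    · exact ⟨I, hI, subset_refl I, Finset.subset_union_left, hcard⟩
    · obtain ⟨x, hxB, hxI, hx⟩ := N.indep_exchange hI hB (lt_of_not_ge hcard)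
      have hlt : B.card - (insert x I).card ≤ k := by
        rw [Finset.card_insert_of_notMem hxI]; omega
      obtain ⟨M, hM1, hM2, hM3, hM4⟩ := ih (insert x I) B hlt hx hB
      refine ⟨M, hM1, (Finset.subset_insert x I).trans hM2, ?_, hM4⟩
      refine hM3.trans ?_
      intro y hy
      rcases Finset.mem_union.1 hy with hy | hy
      · rcases Finset.mem_insert.1 hy with rfl | hy
        · exact Finset.mem_union_right _ hxB
        · exact Finset.mem_union_left _ hy
      · exact Finset.mem_union_right _ hy

/-- The contraction of a matroid by a non-loop element. -/
def contract (N : FinMatroid V) (v : V) (hv : N.Indep {v}) : FinMatroid V where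
  Indep I := v ∉ I ∧ N.Indep (insert v I)
  empty_indep := ⟨Finset.notMem_empty v, by simpa using hv⟩
  indep_subset := fun s t hs hts =>
    ⟨fun h => hs.1 (hts h), N.indep_subset hs.2 (Finset.insert_subset_insert v hts)⟩
  indep_exchange := fun s t hs ht hcard => by
    obtain ⟨x, hxt, hxs, hx⟩ := N.indep_exchange hs.2 ht.2 (by
      rw [Finset.card_insert_of_notMem hs.1, Finset.card_insert_of_notMem ht.1]; omega)
    have hxv : x ≠ v := fun h => hxs (h ▸ Finset.mem_insert_self v s)
    refine ⟨x, ?_, fun h => hxs (Finset.mem_insert_of_mem h), ?_, ?_⟩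
    · rcases Finset.mem_insert.1 hxt with h | h
      · exact absurd h hxv
      · exact h
    · exact fun h => (Finset.mem_insert.1 h).elim (fun he => hxv he.symm) hs.1
    · rwa [Finset.insert_comm]

/-- The main inductive lemma: any cycle of cardinality `n < rk S` supported on the
independent faces inside `S` is a boundary supported there too. -/
lemma main : ∀ (k : ℕ) (S : Finset V), S.card ≤ k → ∀ (N : FinMatroid V) (n : ℕ),
    n < N.rk S →
    ∀ z : FM V, (∀ s ∈ z.support, N.Indep s ∧ s ⊆ S ∧ s.card = n) → D z = 0 →
    ∃ w : FM V, (∀ t ∈ w.support, N.Indep t ∧ t ⊆ S ∧ t.card = n + 1) ∧ D w = z := by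
  intro k
  induction k with
  | zero =>
    intro S hS N n hn z _ _
    obtain ⟨B, hB1, _, hB3⟩ := exists_basis N S
    have : B.card ≤ S.card := Finset.card_le_card hB1
    omega
  | succ k ih =>
    intro S hSk N n hn z hzsupp hzcyc
    obtain ⟨B, hBS, hBind, hBcard⟩ := exists_basis N S
    -- the case of `0`-dimensional cycles (multiples of the empty face)
    rcases Nat.eq_zero_or_pos n with rfl | hnpos
    · have hBne : B.Nonempty := Finset.card_pos.1 (by omega)
      obtain ⟨u, hu⟩ := hBne
      have huS : u ∈ S := hBS hu
      have huI : N.Indep {u} := N.indep_subset hBind (Finset.singleton_subset_iff.2 hu)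
      refine ⟨(z ∅) • Finsupp.single {u} (1:ℚ), ?_, ?_⟩
      · intro t ht
        have := Finsupp.support_smul ht
        have := Finsupp.support_single_subset this
        rw [Finset.mem_singleton] at this
        subst this
        exact ⟨huI, Finset.singleton_subset_iff.2 huS, Finset.card_singleton u⟩
      · rw [map_smul, D_single]
        have hz : z = (z ∅) • Finsupp.single ∅ (1:ℚ) := by
          ext t
          rcases eq_or_ne t ∅ with rfl | hne
          · simp
          · have : t ∉ z.support := fun h =>
              hne (Finset.card_eq_zero.1 (hzsupp t h).2.2)
            rw [Finsupp.notMem_support_iff.1 this, Finsupp.smul_apply,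
              Finsupp.single_apply, if_neg (Ne.symm hne), smul_zero]
        rw [Finset.sum_singleton, Finset.erase_singleton]
        have hsgn : sgn ({u} : Finset V) u = 1 := by
          unfold sgn
          rw [Finset.filter_singleton, if_neg (lt_irrefl u)]
          simp
        rw [hsgn, one_smul, ← hz]
    -- now `n ≥ 1`
    · by_cases hloop : ∃ v ∈ S, ¬ N.Indep {v}
      · -- a loop: the complex and the rank are unchanged by deleting it
        obtain ⟨v, hvS, hvdep⟩ := hloop
        have hvB : v ∉ B := fun h =>
          hvdep (N.indep_subset hBind (Finset.singleton_subset_iff.2 h))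
        have hrk : N.rk S ≤ N.rk (S.erase v) := by
          rw [← hBcard]
          exact card_le_rk (fun x hx => Finset.mem_erase.2
            ⟨fun he => hvB (he ▸ hx), hBS hx⟩) hBind
        have hcard : (S.erase v).card ≤ k := by
          rw [Finset.card_erase_of_mem hvS]
          omega
        obtain ⟨w, hw1, hw2⟩ := ih (S.erase v) hcard N n (lt_of_lt_of_le hn hrk) z
          (fun s hs => ⟨(hzsupp s hs).1, fun x hx => Finset.mem_erase.2
            ⟨fun he => hvdep (N.indep_subset (hzsupp s hs).1
              (Finset.singleton_subset_iff.2 (he ▸ hx))), (hzsupp s hs).2.1 hx⟩,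
            (hzsupp s hs).2.2⟩) hzcyc
        exact ⟨w, fun t ht => ⟨(hw1 t ht).1,
          ((hw1 t ht).2.1).trans (Finset.erase_subset v S), (hw1 t ht).2.2⟩, hw2⟩
      · push_neg at hloop
        by_cases hcone : ∃ v ∈ S, ∀ I, N.Indep I → I ⊆ S → v ∉ I → N.Indep (insert v I)
        · -- a cone point: use the cone homotopy directly
          obtain ⟨v, hvS, hv⟩ := hcone
          refine ⟨hc v z, ?_, ?_⟩
          · intro t ht
            obtain ⟨s, hs, hvs, rfl⟩ := supp_hc ht
            obtain ⟨h1, h2, h3⟩ := hzsupp s hs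
            exact ⟨hv s h1 h2 hvs, Finset.insert_subset hvS h2,
              by rw [Finset.card_insert_of_notMem hvs, h3]⟩
          · have := congrArg (fun φ => φ z) (cone_identity v)
            simp only [LinearMap.add_apply, LinearMap.comp_apply, LinearMap.id_apply] at this
            rw [hzcyc, map_zero, add_zero] at this
            exact this
        · -- no cone point: deletion/contraction argument
          push_neg at hcone
          have hBne : B.Nonempty := Finset.card_pos.1 (by omega)
          obtain ⟨v, hvB⟩ := hBne
          have hvS : v ∈ S := hBS hvB
          have hvInd : N.Indep {v} := hloop v hvS
          obtain ⟨I₀, hI₀ind, hI₀S, hI₀v, hI₀dep⟩ := hcone v hvS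
          -- the rank of the deletion is unchanged
          have hrkdel : N.rk (S.erase v) = N.rk S := by
            obtain ⟨M, hM1, hM2, hM3, hM4⟩ := extend (B.card - I₀.card) I₀ B le_rfl hI₀ind hBind
            have hMS : M ⊆ S := hM3.trans (Finset.union_subset hI₀S hBS)
            have hvM : v ∉ M := fun hvM =>
              hI₀dep (N.indep_subset hM1 (Finset.insert_subset hvM hM2))
            have h1 : N.rk S ≤ N.rk (S.erase v) := by
              refine le_trans ?_ (card_le_rk (fun x hx => Finset.mem_erase.2
                ⟨fun he => hvM (he ▸ hx), hMS hx⟩) hM1)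
              omega
            exact le_antisymm (rk_mono (Finset.erase_subset v S)) h1
          -- the rank of the contraction
          set N' := contract N v hvInd with hN'
          have hrkcon : N'.rk (S.erase v) + 1 = N.rk S := by
            obtain ⟨M, hM1, hM2, hM3, hM4⟩ :=
              extend (B.card - ({v} : Finset V).card) {v} B le_rfl hvInd hBind
            have hMS : M ⊆ S := hM3.trans (Finset.union_subset
              (Finset.singleton_subset_iff.2 hvS) hBS)
            have hvM : v ∈ M := hM2 (Finset.mem_singleton_self v)
            have hMr : M.card = N.rk S := le_antisymm (card_le_rk hMS hM1) (by omega)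
            have hle : N.rk S ≤ N'.rk (S.erase v) + 1 := by
              have hMe : N'.Indep (M.erase v) :=
                ⟨Finset.notMem_erase v M, by rwa [Finset.insert_erase hvM]⟩
              have := card_le_rk (N := N') (Finset.erase_subset_erase v hMS) hMe
              rw [Finset.card_erase_of_mem hvM, hMr] at this
              omega
            have hge : N'.rk (S.erase v) + 1 ≤ N.rk S := by
              obtain ⟨C, hC1, hC2, hC3⟩ := exists_basis N' (S.erase v)
              have : N.Indep (insert v C) := hC2.2
              have hins : insert v C ⊆ S := Finset.insert_subset hvS
                (hC1.trans (Finset.erase_subset v S))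
              have := card_le_rk hins hC2.2
              rw [Finset.card_insert_of_notMem hC2.1, hC3] at this
              omega
            omega
          -- decompose the cycle
          set x := z - pin v z with hx
          set y := Ph v z with hy
          have hxsupp : ∀ s ∈ x.support, v ∉ s ∧ s ∈ z.support := by
            intro s hs
            have happ : x s = if v ∈ s then 0 else z s := by
              rw [hx, Finsupp.sub_apply, pin_apply]
              split_ifs <;> simp
            rw [Finsupp.mem_support_iff, happ] at hs
            by_cases hvs : v ∈ s
            · rw [if_pos hvs] at hs; exact absurd rfl hs
            · rw [if_neg hvs] at hs
              exact ⟨hvs, Finsupp.mem_support_iff.2 hs⟩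
          have hdecomp : z = x + hc v y := by
            have := congrArg (fun φ => φ z) (hc_Ph v)
            simp only [LinearMap.comp_apply] at this
            rw [hx, hy, this]
            abel
          -- `y` is a cycle in the contraction complex
          have hysupp : ∀ s ∈ y.support, N'.Indep s ∧ s ⊆ S.erase v ∧ s.card = n - 1 := by
            intro s hs
            obtain ⟨t, ht, hvt, rfl⟩ := supp_Ph hs
            obtain ⟨h1, h2, h3⟩ := hzsupp t ht
            refine ⟨⟨Finset.notMem_erase v t, by rwa [Finset.insert_erase hvt]⟩,
              Finset.erase_subset_erase v h2, ?_⟩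
            rw [Finset.card_erase_of_mem hvt, h3]
          have hyfree : ∀ s ∈ y.support, v ∉ s := fun s hs => by
            obtain ⟨t, _, _, rfl⟩ := supp_Ph hs
            exact Finset.notMem_erase v t
          have hxfree : ∀ s ∈ x.support, v ∉ s := fun s hs => (hxsupp s hs).1
          have hDhcy : D (hc v y) = y - hc v (D y) := by
            have := congrArg (fun φ => φ y) (cone_identity v)
            simp only [LinearMap.add_apply, LinearMap.comp_apply, LinearMap.id_apply] at this
            rw [eq_sub_iff_add_eq]
            exact this
          have hkey : (0 : FM V) = (D x + y) - hc v (D y) := by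
            calc (0 : FM V) = D z := hzcyc.symm
            _ = D x + D (hc v y) := by rw [hdecomp, map_add]
            _ = D x + (y - hc v (D y)) := by rw [hDhcy]
            _ = (D x + y) - hc v (D y) := by abel
          have hDxfree : ∀ s ∈ (D x).support, v ∉ s := by
            intro s hs
            obtain ⟨t, ht, u, hu, rfl⟩ := supp_D hs
            exact fun hmem => hxfree t ht (Finset.mem_of_mem_erase hmem)
          have hDyfree : ∀ s ∈ (D y).support, v ∉ s := by
            intro s hs
            obtain ⟨t, ht, u, hu, rfl⟩ := supp_D hs
            exact fun hmem => hyfree t ht (Finset.mem_of_mem_erase hmem)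
          have hhcfull : ∀ s ∈ (hc v (D y)).support, v ∈ s := by
            intro s hs
            obtain ⟨t, _, _, rfl⟩ := supp_hc hs
            exact Finset.mem_insert_self v t
          have hhczero : hc v (D y) = 0 := by
            have := congrArg (pin v) hkey
            rw [map_zero, map_sub, map_add, pin_eq_zero hDxfree, pin_eq_zero hyfree,
              pin_eq_self hhcfull, zero_add, zero_sub] at this
            exact neg_eq_zero.1 this.symm
          have hDy : D y = 0 := by
            have := congrArg (Ph v) hhczero
            rw [map_zero] at this
            have h2 := congrArg (fun φ => φ (D y)) (Ph_hc v)
            simp only [LinearMap.comp_apply, LinearMap.sub_apply, LinearMap.id_apply] at h2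
            rw [this, pin_eq_zero hDyfree, sub_zero] at h2
            exact h2.symm
          have hyDx : y = -D x := by
            have h0 : D x + y = 0 := by
              have hk := hkey
              rw [hDy, map_zero, sub_zero] at hk
              exact hk.symm
            exact eq_neg_of_add_eq_zero_right h0
          -- solve in the contraction (link)
          have hcardk : (S.erase v).card ≤ k := by
            rw [Finset.card_erase_of_mem hvS]; omega
          have hn1 : n - 1 < N'.rk (S.erase v) := by omega
          obtain ⟨w, hwsupp, hwD⟩ := ih (S.erase v) hcardk N' (n - 1) hn1 y hysupp hDy
          -- the corrected cycle lives in the deletion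
          set z₂ := x + w with hz₂
          have hz₂supp : ∀ s ∈ z₂.support, N.Indep s ∧ s ⊆ S.erase v ∧ s.card = n := by
            intro s hs
            have := Finsupp.support_add hs
            rcases Finset.mem_union.1 this with hs' | hs'
            · obtain ⟨hvfree, hsz⟩ := hxsupp s hs'
              obtain ⟨h1, h2, h3⟩ := hzsupp s hsz
              exact ⟨h1, fun a ha => Finset.mem_erase.2
                ⟨fun he => hvfree (he ▸ ha), h2 ha⟩, h3⟩
            · obtain ⟨h1, h2, h3⟩ := hwsupp s hs'
              exact ⟨N.indep_subset h1.2 (Finset.subset_insert v s), h2, by omega⟩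
          have hz₂cyc : D z₂ = 0 := by
            rw [hz₂, map_add, hwD, hyDx]
            abel
          -- solve in the deletion
          obtain ⟨u, husupp, huD⟩ := ih (S.erase v) hcardk N n (by omega : n < N.rk (S.erase v))
            z₂ hz₂supp hz₂cyc
          -- assemble the final primitive
          refine ⟨u - hc v w, ?_, ?_⟩
          · intro t ht
            rcases Finset.mem_union.1 (Finsupp.support_sub ht) with ht' | ht'
            · obtain ⟨h1, h2, h3⟩ := husupp t ht'
              exact ⟨h1, h2.trans (Finset.erase_subset v S), h3⟩
            · obtain ⟨s, hs, hvs, rfl⟩ := supp_hc ht'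
              obtain ⟨h1, h2, h3⟩ := hwsupp s hs
              refine ⟨h1.2, ?_, ?_⟩
              · exact Finset.insert_subset hvS (h2.trans (Finset.erase_subset v S))
              · rw [Finset.card_insert_of_notMem hvs]; omega
          · have hDhcw : D (hc v w) = w - hc v (D w) := by
              have := congrArg (fun φ => φ w) (cone_identity v)
              simp only [LinearMap.add_apply, LinearMap.comp_apply, LinearMap.id_apply] at this
              linear_combination (norm := module) this
            rw [map_sub, huD, hDhcw, hwD, hz₂, hdecomp, hy]
            abel

end MICAux

namespace MICAux

variable {V : Type*} [LinearOrder V]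

/-- The embedding of the chains of a simplicial complex into the free module on all
finsets. -/
noncomputable def iota (X : SimplicialCpx V) (n : ℕ) : X.Chain n →ₗ[ℚ] FM V :=
  Finsupp.lmapDomain ℚ ℚ (fun s => s.1)

lemma iota_injective (X : SimplicialCpx V) (n : ℕ) : Function.Injective (iota X n) := by
  have : Function.Injective (fun s : {s : Finset V // s ∈ X.faces ∧ s.card = n} => s.1) :=
    Subtype.val_injective
  intro a b hab
  exact Finsupp.mapDomain_injective this hab

lemma iota_apply (X : SimplicialCpx V) (n : ℕ) (c : X.Chain n) :
    iota X n c = Finsupp.mapDomain (fun s => s.1) c := rfl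

lemma iota_single (X : SimplicialCpx V) (n : ℕ) (a : {s : Finset V // s ∈ X.faces ∧ s.card = n})
    (b : ℚ) : iota X n (Finsupp.single a b) = Finsupp.single a.1 b := by
  rw [iota_apply, Finsupp.mapDomain_single]

/-- The embedding intertwines the boundary operators. -/
lemma iota_bdry (X : SimplicialCpx V) (n : ℕ) (c : X.Chain (n + 1)) :
    iota X n (X.bdry n c) = D (iota X (n + 1) c) := by
  have : (iota X n).comp (X.bdry n) = D.comp (iota X (n + 1)) := by
    apply Finsupp.lhom_ext
    intro a b
    simp only [LinearMap.comp_apply]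
    have hL : iota X n (X.bdry n (Finsupp.single a b)) =
        b • ∑ v ∈ a.1.attach, ((-1:ℚ) ^ (a.1.filter (· < v.1)).card) •
          Finsupp.single (a.1.erase v.1) (1:ℚ) := by
      simp only [SimplicialCpx.bdry, Finsupp.lsum_single, LinearMap.toSpanSingleton_apply,
        map_smul, map_sum]
      congr 1
      refine Finset.sum_congr rfl fun v _ => ?_
      rw [iota_single]
    have hR : D (Finsupp.single a.1 b) =
        b • ∑ u ∈ a.1, sgn a.1 u • Finsupp.single (a.1.erase u) (1:ℚ) := by
      simp [D, Finsupp.lsum_single, LinearMap.toSpanSingleton_apply]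
    rw [iota_single, hL, hR]
    congr 1
    rw [← Finset.sum_attach a.1 (fun u => sgn a.1 u • Finsupp.single (a.1.erase u) (1:ℚ))]
    exact Finset.sum_congr rfl fun v _ => by rw [sgn]
  exact congrArg (fun φ => φ c) this

/-- Chains in the free module supported on faces of `X` come from chains of `X`. -/
lemma iota_realize (X : SimplicialCpx V) (n : ℕ) (m : FM V)
    (h : ∀ s ∈ m.support, s ∈ X.faces ∧ s.card = n) :
    ∃ c : X.Chain n, iota X n c = m := by
  classical
  have hinj : Function.Injective
      (fun s : {s : Finset V // s ∈ X.faces ∧ s.card = n} => s.1) := Subtype.val_injective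
  have hsupp : ↑m.support ⊆ Set.range (fun s : {s : Finset V // s ∈ X.faces ∧ s.card = n} => s.1) :=
    fun s hs => ⟨⟨s, h s hs⟩, rfl⟩
  refine ⟨Finsupp.comapDomain _ m (hinj.injOn), ?_⟩
  rw [iota_apply]
  exact Finsupp.mapDomain_comapDomain _ hinj m hsupp

end MICAux

/-- For a matroid `N` on ground set `V` with rank function `ρ` and independence
complex `Y`, every non-empty `S ⊆ V` satisfies `η(Y[S]) ≥ ρ(S)`, i.e.
`H̃ⱼ(Y[S];ℚ) = 0` for all `j < ρ(S) - 1` (in our indexing, `redH n = H̃_{n-1}`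
vanishes for all `n < ρ(S)`). -/
theorem matroid_indep_complex_homology {V : Type*} [LinearOrder V]
    (N : FinMatroid V) (S : Finset V) (hS : S.Nonempty) :
    (N.rk S : ℕ∞) ≤ (N.indepComplex.induce ↑S).eta ∧
      ∀ n : ℕ, n < N.rk S → Subsingleton ((N.indepComplex.induce ↑S).redH n) := by
  classical
  open MICAux in
  set X := N.indepComplex.induce ↑S with hX
  have hfaces : ∀ t : Finset V, t ∈ X.faces ↔ N.Indep t ∧ t ⊆ S := by
    intro t
    constructor
    · rintro ⟨h1, h2⟩
      exact ⟨h1, Finset.coe_subset.1 h2⟩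
    · rintro ⟨h1, h2⟩
      exact ⟨h1, Finset.coe_subset.2 h2⟩
  have key : ∀ n : ℕ, n < N.rk S → ∀ z : X.Chain n, z ∈ X.cycles n →
      ∃ w : X.Chain (n + 1), X.bdry n w = z := by
    intro n hn z hz
    have hsupp : ∀ s ∈ (iota X n z).support, N.Indep s ∧ s ⊆ S ∧ s.card = n := by
      intro s hs
      rw [iota_apply] at hs
      obtain ⟨a, _, rfl⟩ := Finset.mem_image.1 (Finsupp.mapDomain_support hs)
      exact ⟨((hfaces a.1).1 a.2.1).1, ((hfaces a.1).1 a.2.1).2, a.2.2⟩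
    have hcyc : D (iota X n z) = 0 := by
      cases n with
      | zero =>
        refine D_eq_zero_of_card_zero fun s hs => ?_
        exact Finset.card_eq_zero.1 (hsupp s hs).2.2
      | succ m =>
        have hz' : X.bdry m z = 0 := hz
        rw [← iota_bdry, hz', map_zero]
    obtain ⟨w', hw'supp, hw'D⟩ := MICAux.main S.card S le_rfl N n hn (iota X n z) hsupp hcyc
    obtain ⟨w, hw⟩ := iota_realize X (n + 1) w' fun t ht =>
      ⟨(hfaces t).2 ⟨(hw'supp t ht).1, (hw'supp t ht).2.1⟩, (hw'supp t ht).2.2⟩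
    refine ⟨w, iota_injective X n ?_⟩
    rw [iota_bdry, hw, hw'D]
  have part2 : ∀ n : ℕ, n < N.rk S → Subsingleton (X.redH n) := by
    intro n hn
    have htop : Submodule.comap (X.cycles n).subtype (LinearMap.range (X.bdry n)) = ⊤ := by
      rw [Submodule.eq_top_iff']
      intro x
      obtain ⟨w, hw⟩ := key n hn x.1 x.2
      exact ⟨w, hw⟩
    have : Subsingleton ((X.cycles n) ⧸
        (Submodule.comap (X.cycles n).subtype (LinearMap.range (X.bdry n)))) :=
      Submodule.Quotient.subsingleton_iff.2 htop
    exact this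
  refine ⟨?_, part2⟩
  refine le_sInf ?_
  rintro a ⟨m, rfl, hnt⟩
  have hm : ¬ m < N.rk S := fun h =>
    (not_nontrivial_iff_subsingleton.2 (part2 m h)) hnt
  exact_mod_cast not_lt.1 hm
end

section
/- Let V be finite vector configurations P₁, …, P_{d+1} in ℝ^d and x a point with x ∈ conv(P_i ∪ P_j) for all i < j. Let M be the oriented matroid of the vectors { p − x : p ∈ P₁ ∪ ⋯ ∪ P_{d+1} } and N the transversal matroid of the family {P₁, …, P_{d+1}}. Then every A ⊆ V with ρ_N(V − A) < rank(M) contains a positive circuit of M. -/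
noncomputable section

variable {d : ℕ}

/-- The ground set: the disjoint union of the point sets `P₁, …, P_{d+1}`. -/
abbrev GroundSet (P : Fin (d + 1) → Finset (EuclideanSpace ℝ (Fin d))) : Type _ :=
  (i : Fin (d + 1)) × {p : EuclideanSpace ℝ (Fin d) // p ∈ P i}

/-- `Q` carries a positive linear dependence of the vector configuration `f`. -/
def PosDep {V : Type*} [Fintype V] {E : Type*} [AddCommGroup E] [Module ℝ E]
    (f : V → E) (Q : Finset V) : Prop :=
  ∃ c : V → ℝ, (∀ v ∈ Q, 0 < c v) ∧ (∀ v ∉ Q, c v = 0) ∧ ∑ v, c v • f v = 0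

/-- `Q` is a positive circuit of the oriented matroid of the vector configuration
`f`: a minimal non-empty set carrying a positive linear dependence. -/
def IsPosCircuitOf {V : Type*} [Fintype V] {E : Type*} [AddCommGroup E] [Module ℝ E]
    (f : V → E) (Q : Finset V) : Prop :=
  Q.Nonempty ∧ PosDep f Q ∧ ∀ Q' ⊂ Q, Q'.Nonempty → ¬ PosDep f Q'

/-- A partial transversal of the family `{P i}`: a set admitting an injective system
of distinct representatives assignment into the colour classes. -/
def IsPartialTransversal (P : Fin (d + 1) → Finset (EuclideanSpace ℝ (Fin d)))
    (T : Finset (GroundSet P)) : Prop :=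
  ∃ φ : GroundSet P → Fin (d + 1), Set.InjOn φ ↑T ∧ ∀ v ∈ T, (v.2 : EuclideanSpace ℝ (Fin d)) ∈ P (φ v)

/-- The rank function of the transversal matroid of the family `{P i}`. -/
def transversalRk (P : Fin (d + 1) → Finset (EuclideanSpace ℝ (Fin d)))
    (S : Set (GroundSet P)) : ℕ :=
  sSup {n | ∃ T : Finset (GroundSet P), ↑T ⊆ S ∧ IsPartialTransversal P T ∧ T.card = n}

/-- Any non-empty set carrying a positive dependence contains a positive circuit. -/
theorem exists_posCircuit_subset {V : Type*} [Fintype V] [DecidableEq V] {E : Type*}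
    [AddCommGroup E] [Module ℝ E] (f : V → E) :
    ∀ Q : Finset V, Q.Nonempty → PosDep f Q → ∃ Q' ⊆ Q, IsPosCircuitOf f Q' := by
  intro Q
  induction Q using Finset.strongInduction with
  | _ Q ih =>
    intro h1 h2
    by_cases h : ∀ Q' ⊂ Q, Q'.Nonempty → ¬ PosDep f Q'
    · exact ⟨Q, subset_rfl, h1, h2, h⟩
    · push_neg at h
      obtain ⟨Q', hsub, hne, hdep⟩ := h
      obtain ⟨Q'', hsub', hc⟩ := ih Q' hsub hne hdep
      exact ⟨Q'', hsub'.trans hsub.subset, hc⟩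

/-- Verification of the hypothesis of the main theorem in the realizable case:
if `x ∈ conv (Pᵢ ∪ Pⱼ)` for all `i < j`, then every `A ⊆ V` whose complement has
transversal-matroid rank less than the rank of the oriented matroid of the vectors
`{p - x}` (namely `dim span {p - x}`) contains a positive circuit of that oriented
matroid. -/
theorem realizable_hypothesis
    (P : Fin (d + 1) → Finset (EuclideanSpace ℝ (Fin d)))
    (x : EuclideanSpace ℝ (Fin d))
    (hx : ∀ i j : Fin (d + 1), i < j →
      x ∈ convexHull ℝ ((P i : Set (EuclideanSpace ℝ (Fin d))) ∪ ↑(P j)))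
    (f : GroundSet P → EuclideanSpace ℝ (Fin d))
    (hf : ∀ v, f v = (v.2 : EuclideanSpace ℝ (Fin d)) - x)
    (A : Set (GroundSet P))
    (hA : transversalRk P (Set.univ \ A) <
      Module.finrank ℝ (Submodule.span ℝ (Set.range f))) :
    ∃ Q : Finset (GroundSet P), ↑Q ⊆ A ∧ IsPosCircuitOf f Q := by
  classical
  -- The rank of the oriented matroid is at most `d`.
  have hrk : Module.finrank ℝ (Submodule.span ℝ (Set.range f)) ≤ d := by
    have h1 := Submodule.finrank_le (Submodule.span ℝ (Set.range f))
    simpa [finrank_euclideanSpace] using h1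
  -- The set of colours having an element outside `A`.
  set Bad : Finset (Fin (d + 1)) :=
    Finset.univ.filter (fun k => ∃ v : GroundSet P, v.1 = k ∧ v ∉ A) with hBad
  have hwit : ∀ k ∈ Bad, ∃ v : GroundSet P, v.1 = k ∧ v ∉ A := by
    intro k hk
    simpa [hBad] using hk
  choose g hg1 hg2 using hwit
  set T : Finset (GroundSet P) := Bad.attach.image (fun k => g k.1 k.2) with hT
  have hginj : Function.Injective (fun k : {y // y ∈ Bad} => g k.1 k.2) := by
    intro a b hab
    exact Subtype.ext (((hg1 a.1 a.2).symm.trans (congrArg Sigma.fst hab)).trans (hg1 b.1 b.2))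
  have hTcard : T.card = Bad.card := by
    rw [hT, Finset.card_image_of_injective _ hginj, Finset.card_attach]
  have hTsub : ↑T ⊆ Set.univ \ A := by
    intro v hv
    simp only [hT, Finset.coe_image, Set.mem_image] at hv
    obtain ⟨k, _, rfl⟩ := hv
    exact ⟨trivial, hg2 k.1 k.2⟩
  have hTtrans : IsPartialTransversal P T := by
    refine ⟨Sigma.fst, ?_, ?_⟩
    · intro a ha b hb hab
      simp only [hT, Finset.coe_image, Set.mem_image] at ha hb
      obtain ⟨k, _, rfl⟩ := ha
      obtain ⟨l, _, rfl⟩ := hb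
      have h : k = l :=
        Subtype.ext (((hg1 k.1 k.2).symm.trans hab).trans (hg1 l.1 l.2))
      rw [h]
    · intro v _
      exact v.2.2
  have hBadle : Bad.card ≤ transversalRk P (Set.univ \ A) := by
    apply le_csSup
    · refine ⟨Fintype.card (GroundSet P), ?_⟩
      rintro n ⟨T', -, -, rfl⟩
      exact Finset.card_le_univ T'
    · exact ⟨T, hTsub, hTtrans, hTcard⟩
  have hBadlt : Bad.card < d := lt_of_le_of_lt hBadle (lt_of_lt_of_le hA hrk)
  have hcompl : 1 < Badᶜ.card := by
    have h1 : Badᶜ.card = (d + 1) - Bad.card := by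
      simp [Finset.card_compl]
    omega
  obtain ⟨i0, hi0, j0, hj0, hij0⟩ := Finset.one_lt_card.mp hcompl
  rw [Finset.mem_compl] at hi0 hj0
  -- The core argument, for any two good colours `i < j`.
  have key : ∀ i j : Fin (d + 1), i ∉ Bad → j ∉ Bad → i < j →
      ∃ Q : Finset (GroundSet P), ↑Q ⊆ A ∧ IsPosCircuitOf f Q := by
    intro i j hi hj hij
    have hij' : i ≠ j := ne_of_lt hij
    have hiA : ∀ v : GroundSet P, v.1 = i → v ∈ A := by
      intro v hv
      by_contra hvA
      exact hi (by
        simp only [hBad, Finset.mem_filter, Finset.mem_univ, true_and]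
        exact ⟨v, hv, hvA⟩)
    have hjA : ∀ v : GroundSet P, v.1 = j → v ∈ A := by
      intro v hv
      by_contra hvA
      exact hj (by
        simp only [hBad, Finset.mem_filter, Finset.mem_univ, true_and]
        exact ⟨v, hv, hvA⟩)
    have hx' := hx i j hij
    rw [← Finset.coe_union, Finset.convexHull_eq] at hx'
    obtain ⟨w, hw0, hw1, hwx⟩ := hx'
    rw [Finset.centerMass_eq_of_sum_1 _ _ hw1] at hwx
    simp only [id] at hwx
    -- transport the weights to the ground set
    set c : GroundSet P → ℝ := fun v =>
      if v.1 = i then w v.2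
      else if v.1 = j ∧ (v.2 : EuclideanSpace ℝ (Fin d)) ∉ P i then w v.2 else 0 with hc
    have hcnn : ∀ v, 0 ≤ c v := by
      intro v
      rw [hc]
      dsimp only
      split_ifs with h1 h2
      · exact hw0 _ (Finset.mem_union_left _ (h1 ▸ v.2.2))
      · exact hw0 _ (Finset.mem_union_right _ (h2.1 ▸ v.2.2))
      · exact le_refl 0
    have hsum : ∑ v, c v • f v = 0 := by
      have e2 : ∀ k ∈ Finset.univ, k ∉ ({i, j} : Finset (Fin (d + 1))) →
          ∑ p ∈ (P k).attach, c ⟨k, p⟩ • f ⟨k, p⟩ = 0 := by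
        intro k _ hk
        simp only [Finset.mem_insert, Finset.mem_singleton] at hk
        push_neg at hk
        apply Finset.sum_eq_zero
        intro p _
        rw [hc]
        simp [hk.1, hk.2]
      have e3 : ∑ p ∈ (P i).attach, c ⟨i, p⟩ • f ⟨i, p⟩
          = ∑ y ∈ P i, w y • (y - x) := by
        rw [← Finset.sum_attach (P i) (fun y => w y • (y - x))]
        refine Finset.sum_congr rfl fun p _ => ?_
        rw [hc, hf]
        simp
      have e4 : ∑ p ∈ (P j).attach, c ⟨j, p⟩ • f ⟨j, p⟩
          = ∑ y ∈ P j \ P i, w y • (y - x) := by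
        rw [Finset.sdiff_eq_filter, Finset.sum_filter,
          ← Finset.sum_attach (P j) (fun y => if y ∉ P i then w y • (y - x) else 0)]
        refine Finset.sum_congr rfl fun p _ => ?_
        rw [hc, hf]
        by_cases hp : (p : EuclideanSpace ℝ (Fin d)) ∈ P i
        · simp [hij'.symm, hp]
        · simp [hij'.symm, hp]
      calc ∑ v, c v • f v
          = ∑ k : Fin (d + 1), ∑ p ∈ (P k).attach, c ⟨k, p⟩ • f ⟨k, p⟩ := by
            rw [← Finset.univ_sigma_univ, Finset.sum_sigma]
            simp_rw [Finset.univ_eq_attach]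
        _ = ∑ k ∈ ({i, j} : Finset (Fin (d + 1))),
              ∑ p ∈ (P k).attach, c ⟨k, p⟩ • f ⟨k, p⟩ :=
            (Finset.sum_subset (Finset.subset_univ _) e2).symm
        _ = ∑ y ∈ P i, w y • (y - x) + ∑ y ∈ P j \ P i, w y • (y - x) := by
            rw [Finset.sum_pair hij', e3, e4]
        _ = ∑ y ∈ P i ∪ P j, w y • (y - x) := by
            rw [← Finset.sum_union Finset.disjoint_sdiff, Finset.union_sdiff_self_eq_union]
        _ = (∑ y ∈ P i ∪ P j, w y • y) - (∑ y ∈ P i ∪ P j, w y) • x := by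
            simp [smul_sub, Finset.sum_sub_distrib, Finset.sum_smul]
        _ = 0 := by rw [hwx, hw1, one_smul, sub_self]
    set Q0 : Finset (GroundSet P) := Finset.univ.filter (fun v => 0 < c v) with hQ0
    have hQ0A : ↑Q0 ⊆ A := by
      intro v hv
      simp only [hQ0, Finset.coe_filter, Set.mem_setOf_eq] at hv
      by_cases h1 : v.1 = i
      · exact hiA v h1
      · by_cases h2 : v.1 = j
        · exact hjA v h2
        · exfalso
          rw [hc] at hv
          simp only [h1, h2, if_false, false_and] at hv
          exact absurd hv.2 (lt_irrefl 0)
    have hQ0ne : Q0.Nonempty := by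
      have hex : ∃ y ∈ P i ∪ P j, 0 < w y := by
        by_contra hcon
        push_neg at hcon
        have hle : ∑ y ∈ P i ∪ P j, w y ≤ 0 := Finset.sum_nonpos hcon
        rw [hw1] at hle
        linarith
      obtain ⟨y, hy, hwy⟩ := hex
      by_cases hyi : y ∈ P i
      · exact ⟨⟨i, ⟨y, hyi⟩⟩, by simp [hQ0, hc, hwy]⟩
      · have hyj : y ∈ P j := by
          rcases Finset.mem_union.mp hy with h | h
          · exact absurd h hyi
          · exact h
        refine ⟨⟨j, ⟨y, hyj⟩⟩, ?_⟩
        simp [hQ0, hc, hij'.symm, hyi, hwy]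
    have hdep : PosDep f Q0 := by
      refine ⟨c, fun v hv => (Finset.mem_filter.mp hv).2, fun v hv => ?_, hsum⟩
      have h1 : ¬ 0 < c v := fun h => hv (Finset.mem_filter.mpr ⟨Finset.mem_univ v, h⟩)
      linarith [hcnn v]
    obtain ⟨Q, hQsub, hQcirc⟩ := exists_posCircuit_subset f Q0 hQ0ne hdep
    exact ⟨Q, fun v hv => hQ0A (hQsub hv), hQcirc⟩
  rcases hij0.lt_or_gt with h | h
  · exact key i0 j0 hi0 hj0 h
  · exact key j0 i0 hj0 hi0 h

end
end
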